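/- arXiv:math/0409599 — 5 statements merged into one kernel-verified Lean document; each statement's English description precedes it below -/
import Mathlib

section
/- In a weak bialgebra H over a commutative ring, Δ(1) lies in H_s ⊗ H_t, the image of the tensor product of the source space and the target space in H ⊗ H. -/
open TensorProduct

structure WeakBialgebra (k H : Type*) [CommRing k] [Ring H] [Algebra k H] where
  comul : H →ₗ[k] H ⊗[k] H
  counit : H →ₗ[k] k
  coassoc : ∀ h : H, (TensorProduct.assoc k H H H) ((comul.rTensor H) (comul h)) =
      (comul.lTensor H) (comul h)
  counit_left : ∀ h : H, (TensorProduct.lid k H) ((counit.rTensor H) (comul h)) = h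
  counit_right : ∀ h : H, (TensorProduct.rid k H) ((counit.lTensor H) (comul h)) = h
  comul_mul : ∀ h g : H, comul (h * g) = comul h * comul g
  weak_unit_left : (comul.lTensor H) (comul 1) =
      (Algebra.TensorProduct.map (AlgHom.id k H)
        (Algebra.TensorProduct.includeLeft : H →ₐ[k] H ⊗[k] H)) (comul 1) *
      (Algebra.TensorProduct.includeRight : (H ⊗[k] H) →ₐ[k] H ⊗[k] (H ⊗[k] H)) (comul 1)
  weak_unit_right : (comul.lTensor H) (comul 1) =
      (Algebra.TensorProduct.includeRight : (H ⊗[k] H) →ₐ[k] H ⊗[k] (H ⊗[k] H)) (comul 1) *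
      (Algebra.TensorProduct.map (AlgHom.id k H)
        (Algebra.TensorProduct.includeLeft : H →ₐ[k] H ⊗[k] H)) (comul 1)
  weak_counit₁ : ∀ h g l : H, counit (h * g * l) =
      (LinearMap.mul' k k) ((TensorProduct.map counit counit)
        ((h ⊗ₜ[k] (1 : H)) * comul g * ((1 : H) ⊗ₜ[k] l)))
  weak_counit₂ : ∀ h g l : H, counit (h * g * l) =
      (LinearMap.mul' k k) ((TensorProduct.map counit counit)
        ((h ⊗ₜ[k] (1 : H)) * (TensorProduct.comm k H H) (comul g) * ((1 : H) ⊗ₜ[k] l)))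

namespace WeakBialgebra

variable {k H : Type*} [CommRing k] [Ring H] [Algebra k H] (W : WeakBialgebra k H)

/-- The target map `ε_t(h) = ε(1_{(1)}h)1_{(2)}`. -/
noncomputable def εt : H →ₗ[k] H :=
  (TensorProduct.lid k H).toLinearMap ∘ₗ (W.counit.rTensor H) ∘ₗ
    (LinearMap.mulLeft k (W.comul 1)) ∘ₗ
    (Algebra.TensorProduct.includeLeft : H →ₐ[k] H ⊗[k] H).toLinearMap

/-- The source map `ε_s(h) = 1_{(1)}ε(h1_{(2)})`. -/
noncomputable def εs : H →ₗ[k] H :=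
  (TensorProduct.rid k H).toLinearMap ∘ₗ (W.counit.lTensor H) ∘ₗ
    (LinearMap.mulRight k (W.comul 1)) ∘ₗ
    (Algebra.TensorProduct.includeRight : H →ₐ[k] H ⊗[k] H).toLinearMap

/-- `ε̄_t(h) = ε(h1_{(1)})1_{(2)}`. -/
noncomputable def εt' : H →ₗ[k] H :=
  (TensorProduct.lid k H).toLinearMap ∘ₗ (W.counit.rTensor H) ∘ₗ
    (LinearMap.mulRight k (W.comul 1)) ∘ₗ
    (Algebra.TensorProduct.includeLeft : H →ₐ[k] H ⊗[k] H).toLinearMap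

/-- `ε̄_s(h) = ε(1_{(2)}h)1_{(1)}`. -/
noncomputable def εs' : H →ₗ[k] H :=
  (TensorProduct.rid k H).toLinearMap ∘ₗ (W.counit.lTensor H) ∘ₗ
    (LinearMap.mulLeft k (W.comul 1)) ∘ₗ
    (Algebra.TensorProduct.includeRight : H →ₐ[k] H ⊗[k] H).toLinearMap

end WeakBialgebra

/-- A weak Hopf algebra: a weak bialgebra with an antipode. -/
structure WeakHopf (k H : Type*) [CommRing k] [Ring H] [Algebra k H] where
  W : WeakBialgebra k H
  S : H →ₗ[k] H
  S_conv_id : ∀ h : H, (LinearMap.mul' k H) ((S.rTensor H) (W.comul h)) = W.εs h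
  id_conv_S : ∀ h : H, (LinearMap.mul' k H) ((S.lTensor H) (W.comul h)) = W.εt h
  S_conv_id_conv_S : ∀ h : H, (LinearMap.mul' k H) ((LinearMap.lTensor H (LinearMap.mul' k H))
      ((TensorProduct.map S (TensorProduct.map LinearMap.id S))
        ((W.comul.lTensor H) (W.comul h)))) = S h

/-- `Δ(1)` lies in the image of `H_s ⊗ H_t` in `H ⊗ H`. -/
theorem weakBialgebra_comul_one_mem
    {k H : Type*} [CommRing k] [Ring H] [Algebra k H] (W : WeakBialgebra k H) :
    W.comul 1 ∈ LinearMap.range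
      (TensorProduct.map (LinearMap.range W.εs).subtype (LinearMap.range W.εt).subtype) := by
  set x := W.comul 1 with hxdef
  obtain ⟨s, hx⟩ := TensorProduct.exists_finset x
  set g : H ⊗[k] H →ₗ[k] H :=
    (TensorProduct.lid k H).toLinearMap ∘ₗ (W.counit.rTensor H) with hg
  have hgcomul : g ∘ₗ W.comul = LinearMap.id := by
    ext h; exact W.counit_left h
  -- key equation: x = ∑ q ∑ p, ε(q₁ p₂) • (p₁ ⊗ q₂)
  have hE : x = ∑ q ∈ s, ∑ p ∈ s, W.counit (q.1 * p.2) • (p.1 ⊗ₜ[k] q.2) := by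
    have h1 := congrArg (LinearMap.lTensor H g) W.weak_unit_right
    rw [← LinearMap.comp_apply, ← LinearMap.lTensor_comp, hgcomul, LinearMap.lTensor_id,
      LinearMap.id_apply] at h1
    rw [← hxdef] at h1
    rw [h1]
    conv_lhs => rw [hx]
    rw [map_sum, map_sum, Finset.sum_mul_sum, map_sum]
    refine Finset.sum_congr rfl fun q _ => ?_
    rw [map_sum]
    refine Finset.sum_congr rfl fun p _ => ?_
    simp only [Algebra.TensorProduct.includeRight_apply, Algebra.TensorProduct.map_tmul,
      AlgHom.coe_id, id_eq, Algebra.TensorProduct.includeLeft_apply,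
      Algebra.TensorProduct.tmul_mul_tmul, one_mul, mul_one, LinearMap.lTensor_tmul, hg,
      LinearMap.comp_apply, LinearMap.rTensor_tmul, LinearEquiv.coe_coe, TensorProduct.lid_tmul,
      TensorProduct.tmul_smul]
  have hs_apply : ∀ c : H, W.εs c = ∑ p ∈ s, W.counit (c * p.2) • p.1 := by
    intro c
    simp only [WeakBialgebra.εs, LinearMap.comp_apply, AlgHom.toLinearMap_apply,
      Algebra.TensorProduct.includeRight_apply, LinearMap.mulRight_apply]
    rw [← hxdef]
    conv_lhs => rw [hx]
    rw [Finset.mul_sum, map_sum, map_sum]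
    refine Finset.sum_congr rfl fun p _ => ?_
    simp only [Algebra.TensorProduct.tmul_mul_tmul, one_mul, LinearMap.lTensor_tmul,
      LinearEquiv.coe_coe, TensorProduct.rid_tmul]
  have ht_apply : ∀ b : H, W.εt b = ∑ q ∈ s, W.counit (q.1 * b) • q.2 := by
    intro b
    simp only [WeakBialgebra.εt, LinearMap.comp_apply, AlgHom.toLinearMap_apply,
      Algebra.TensorProduct.includeLeft_apply, LinearMap.mulLeft_apply]
    rw [← hxdef]
    conv_lhs => rw [hx]
    rw [Finset.sum_mul, map_sum, map_sum]
    refine Finset.sum_congr rfl fun q _ => ?_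
    simp only [Algebra.TensorProduct.tmul_mul_tmul, mul_one, LinearMap.rTensor_tmul,
      LinearEquiv.coe_coe, TensorProduct.lid_tmul]
  have hA : W.εs.rTensor H x = x := by
    have : W.εs.rTensor H x = ∑ q ∈ s, ∑ p ∈ s, W.counit (q.1 * p.2) • (p.1 ⊗ₜ[k] q.2) := by
      conv_lhs => rw [hx]
      rw [map_sum]
      refine Finset.sum_congr rfl fun q _ => ?_
      rw [LinearMap.rTensor_tmul, hs_apply, TensorProduct.sum_tmul]
      refine Finset.sum_congr rfl fun p _ => ?_
      rw [TensorProduct.smul_tmul']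
    rw [this, ← hE]
  have hB : W.εt.lTensor H x = x := by
    have : W.εt.lTensor H x = ∑ p ∈ s, ∑ q ∈ s, W.counit (q.1 * p.2) • (p.1 ⊗ₜ[k] q.2) := by
      conv_lhs => rw [hx]
      rw [map_sum]
      refine Finset.sum_congr rfl fun p _ => ?_
      rw [LinearMap.lTensor_tmul, ht_apply, TensorProduct.tmul_sum]
      refine Finset.sum_congr rfl fun q _ => ?_
      rw [TensorProduct.tmul_smul]
    rw [this, Finset.sum_comm, ← hE]
  refine ⟨(TensorProduct.map (W.εs.rangeRestrict) (W.εt.rangeRestrict)) x, ?_⟩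
  rw [← LinearMap.comp_apply, ← TensorProduct.map_comp]
  have h1 : (LinearMap.range W.εs).subtype ∘ₗ W.εs.rangeRestrict = W.εs := rfl
  have h2 : (LinearMap.range W.εt).subtype ∘ₗ W.εt.rangeRestrict = W.εt := rfl
  rw [h1, h2, ← LinearMap.lTensor_comp_rTensor, LinearMap.comp_apply, hA, hB]
end

section
/- In a weak bialgebra H, the target space can be characterized as H_t = {h ∈ H | Δ(h) = 1_{(1)}h ⊗ 1_{(2)}}, and the source space as H_s = {h ∈ H | Δ(h) = 1_{(1)} ⊗ h1_{(2)}}. -/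
open TensorProduct

section Aux

variable {k H : Type*} [CommRing k] [Ring H] [Algebra k H] (W : WeakBialgebra k H) (h : H)

/-- `φ h a = ε (a * h)` -/
private noncomputable def φAux : H →ₗ[k] k := W.counit ∘ₗ LinearMap.mulRight k h

/-- `ψ h b = ε (h * b)` -/
private noncomputable def ψAux : H →ₗ[k] k := W.counit ∘ₗ LinearMap.mulLeft k h

private lemma lemC (u : H ⊗[k] H) :
    (LinearMap.rTensor H (φAux W h)) u =
      (LinearMap.rTensor H W.counit) (u * (h ⊗ₜ[k] (1 : H))) := by
  induction u using TensorProduct.induction_on with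
  | zero => simp
  | tmul a b => simp [φAux, Algebra.TensorProduct.tmul_mul_tmul]
  | add x y hx hy => simp only [map_add, add_mul, hx, hy]

private lemma lemD (u : H ⊗[k] H) :
    (LinearMap.lTensor H (ψAux W h)) u =
      (LinearMap.lTensor H W.counit) (((1 : H) ⊗ₜ[k] h) * u) := by
  induction u using TensorProduct.induction_on with
  | zero => simp
  | tmul a b => simp [ψAux, Algebra.TensorProduct.tmul_mul_tmul]
  | add x y hx hy => simp only [map_add, mul_add, hx, hy]

private lemma lemE (u : H ⊗[k] H) :
    W.comul ((TensorProduct.lid k H) ((LinearMap.rTensor H (φAux W h)) u)) =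
      (TensorProduct.lid k (H ⊗[k] H))
        ((LinearMap.rTensor (H ⊗[k] H) (φAux W h)) ((W.comul.lTensor H) u)) := by
  induction u using TensorProduct.induction_on with
  | zero => simp
  | tmul a b => simp [TensorProduct.smul_tmul']
  | add x y hx hy => simp only [map_add, hx, hy]

private lemma lemF (u : H ⊗[k] H) :
    W.comul ((TensorProduct.rid k H) ((LinearMap.lTensor H (ψAux W h)) u)) =
      (TensorProduct.rid k (H ⊗[k] H))
        ((LinearMap.lTensor (H ⊗[k] H) (ψAux W h)) ((W.comul.rTensor H) u)) := by
  induction u using TensorProduct.induction_on with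
  | zero => simp
  | tmul a b => simp
  | add x y hx hy => simp only [map_add, hx, hy]

private lemma lemA (u v : H ⊗[k] H) :
    (TensorProduct.lid k (H ⊗[k] H))
      ((LinearMap.rTensor (H ⊗[k] H) (φAux W h))
        ((Algebra.TensorProduct.includeRight : (H ⊗[k] H) →ₐ[k] H ⊗[k] (H ⊗[k] H)) v *
          (Algebra.TensorProduct.map (AlgHom.id k H)
            (Algebra.TensorProduct.includeLeft : H →ₐ[k] H ⊗[k] H)) u)) =
    v * (((TensorProduct.lid k H) ((LinearMap.rTensor H (φAux W h)) u)) ⊗ₜ[k] (1 : H)) := by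
  induction u using TensorProduct.induction_on with
  | zero => simp
  | tmul a b =>
      simp only [Algebra.TensorProduct.includeRight_apply, Algebra.TensorProduct.map_tmul,
        AlgHom.coe_id, id_eq, Algebra.TensorProduct.includeLeft_apply,
        Algebra.TensorProduct.tmul_mul_tmul, one_mul, LinearMap.rTensor_tmul,
        TensorProduct.lid_tmul]
      rw [← TensorProduct.smul_tmul', mul_smul_comm]
  | add x y hx hy => simp only [map_add, mul_add, add_mul, TensorProduct.add_tmul, hx, hy]

private lemma lemB (u v : H ⊗[k] H) :
    (TensorProduct.rid k (H ⊗[k] H))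
      ((LinearMap.lTensor (H ⊗[k] H) (ψAux W h))
        ((TensorProduct.assoc k H H H).symm
          ((Algebra.TensorProduct.includeRight : (H ⊗[k] H) →ₐ[k] H ⊗[k] (H ⊗[k] H)) v *
            (Algebra.TensorProduct.map (AlgHom.id k H)
              (Algebra.TensorProduct.includeLeft : H →ₐ[k] H ⊗[k] H)) u))) =
    ((1 : H) ⊗ₜ[k] ((TensorProduct.rid k H) ((LinearMap.lTensor H (ψAux W h)) v))) * u := by
  induction u using TensorProduct.induction_on with
  | zero => simp
  | tmul a b =>
      induction v using TensorProduct.induction_on with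
      | zero => simp
      | tmul c d =>
          simp only [Algebra.TensorProduct.includeRight_apply, Algebra.TensorProduct.map_tmul,
            AlgHom.coe_id, id_eq, Algebra.TensorProduct.includeLeft_apply,
            Algebra.TensorProduct.tmul_mul_tmul, one_mul, mul_one,
            TensorProduct.assoc_symm_tmul, LinearMap.lTensor_tmul, TensorProduct.rid_tmul]
          rw [smul_mul_assoc, TensorProduct.tmul_smul, TensorProduct.smul_tmul']
      | add x y hx hy =>
          simp only [map_add, mul_add, add_mul, TensorProduct.tmul_add, hx, hy]
  | add x y hx hy => simp only [map_add, mul_add, add_mul, hx, hy]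

private lemma εt_eq : W.εt h =
    (TensorProduct.lid k H) ((LinearMap.rTensor H (φAux W h)) (W.comul 1)) := by
  rw [lemC]
  simp [WeakBialgebra.εt]

private lemma εs_eq : W.εs h =
    (TensorProduct.rid k H) ((LinearMap.lTensor H (ψAux W h)) (W.comul 1)) := by
  rw [lemD]
  simp [WeakBialgebra.εs]

private lemma comul_εt : W.comul (W.εt h) = W.comul 1 * ((W.εt h) ⊗ₜ[k] (1 : H)) := by
  conv_lhs => rw [εt_eq, lemE, W.weak_unit_right, lemA, ← εt_eq]

private lemma comul_εs : W.comul (W.εs h) = ((1 : H) ⊗ₜ[k] (W.εs h)) * W.comul 1 := by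
  have hco : W.comul.rTensor H (W.comul 1) =
      (TensorProduct.assoc k H H H).symm ((W.comul.lTensor H) (W.comul 1)) :=
    (LinearEquiv.eq_symm_apply _).mpr (W.coassoc 1)
  conv_lhs => rw [εs_eq, lemF, hco, W.weak_unit_right, lemB, ← εs_eq]

end Aux

/-- Characterization of the target and source spaces:
`H_t = {h | Δ(h) = 1₍₁₎h ⊗ 1₍₂₎}` and `H_s = {h | Δ(h) = 1₍₁₎ ⊗ h1₍₂₎}`. -/
theorem weakBialgebra_target_source_characterization
    {k H : Type*} [CommRing k] [Ring H] [Algebra k H] (W : WeakBialgebra k H) :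
    Set.range W.εt = {h : H | W.comul h = W.comul 1 * (h ⊗ₜ[k] (1 : H))} ∧
    Set.range W.εs = {h : H | W.comul h = ((1 : H) ⊗ₜ[k] h) * W.comul 1} := by
  constructor
  · ext x
    simp only [Set.mem_range, Set.mem_setOf_eq]
    constructor
    · rintro ⟨g, rfl⟩
      exact comul_εt W g
    · intro hx
      refine ⟨x, ?_⟩
      rw [εt_eq, lemC, ← hx]
      exact W.counit_left x
  · ext x
    simp only [Set.mem_range, Set.mem_setOf_eq]
    constructor
    · rintro ⟨g, rfl⟩
      exact comul_εs W g
    · intro hx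
      refine ⟨x, ?_⟩
      rw [εs_eq, lemD, ← hx]
      exact W.counit_right x
end

section
/- In a weak bialgebra H, the map ε̄_s(h) = ε(1_{(2)}h)1_{(1)} restricts to an anti-algebra isomorphism H_t → H_s with inverse the restriction of ε_t, and ε̄_t(h) = ε(h1_{(1)})1_{(2)} restricts to an anti-algebra isomorphism H_s → H_t with inverse the restriction of ε_s. -/
open TensorProduct

namespace WeakBialgebra

variable {k H : Type*} [CommRing k] [Ring H] [Algebra k H] (W : WeakBialgebra k H)

/-- `Jl (q ⊗ r) = ε(q) • r`. -/
noncomputable def Jl : H ⊗[k] H →ₗ[k] H :=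
  (TensorProduct.lid k H).toLinearMap ∘ₗ W.counit.rTensor H

/-- `Jr (q ⊗ r) = ε(r) • q`. -/
noncomputable def Jr : H ⊗[k] H →ₗ[k] H :=
  (TensorProduct.rid k H).toLinearMap ∘ₗ W.counit.lTensor H

@[simp] lemma Jl_tmul (q r : H) : W.Jl (q ⊗ₜ[k] r) = W.counit q • r := by
  simp [Jl]

@[simp] lemma Jr_tmul (q r : H) : W.Jr (q ⊗ₜ[k] r) = W.counit r • q := by
  simp [Jr]

@[simp] lemma Jl_comul (w : H) : W.Jl (W.comul w) = w := by
  simpa [Jl] using W.counit_left w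

@[simp] lemma Jr_comul (w : H) : W.Jr (W.comul w) = w := by
  simpa [Jr] using W.counit_right w

/-- `Φ₁ f (p ⊗ (q ⊗ r)) = f p • (ε q • r)`. -/
noncomputable def Φ₁ (f : H →ₗ[k] k) : H ⊗[k] (H ⊗[k] H) →ₗ[k] H :=
  W.Jl ∘ₗ (TensorProduct.lid k (H ⊗[k] H)).toLinearMap ∘ₗ f.rTensor (H ⊗[k] H)

@[simp] lemma Φ₁_tmul (f : H →ₗ[k] k) (p : H) (w : H ⊗[k] H) :
    W.Φ₁ f (p ⊗ₜ[k] w) = f p • W.Jl w := by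
  simp [Φ₁]

/-- `Φ₂ g (p ⊗ (q ⊗ r)) = (ε q * g r) • p`. -/
noncomputable def Φ₂ (g : H →ₗ[k] k) : H ⊗[k] (H ⊗[k] H) →ₗ[k] H :=
  (TensorProduct.rid k H).toLinearMap ∘ₗ LinearMap.lTensor H (g ∘ₗ W.Jl)

@[simp] lemma Φ₂_tmul (g : H →ₗ[k] k) (p : H) (w : H ⊗[k] H) :
    W.Φ₂ g (p ⊗ₜ[k] w) = g (W.Jl w) • p := by
  simp [Φ₂]

/-- `Θ f g (p ⊗ (q ⊗ r)) = f p • (g r • q)`. -/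
noncomputable def Θ (f g : H →ₗ[k] k) : H ⊗[k] (H ⊗[k] H) →ₗ[k] H :=
  (TensorProduct.lid k H).toLinearMap ∘ₗ f.rTensor H ∘ₗ
    LinearMap.lTensor H ((TensorProduct.rid k H).toLinearMap ∘ₗ LinearMap.lTensor H g)

@[simp] lemma Θ_tmul (f g : H →ₗ[k] k) (p q r : H) :
    Θ f g (p ⊗ₜ[k] (q ⊗ₜ[k] r)) = f p • (g r • q) := by
  simp [Θ]
  exact smul_comm _ _ _

/-- `Ψ₁ f (p ⊗ w) = f p • w`. -/
noncomputable def Ψ₁ (f : H →ₗ[k] k) : H ⊗[k] (H ⊗[k] H) →ₗ[k] H ⊗[k] H :=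
  (TensorProduct.lid k (H ⊗[k] H)).toLinearMap ∘ₗ f.rTensor (H ⊗[k] H)

@[simp] lemma Ψ₁_tmul (f : H →ₗ[k] k) (p : H) (w : H ⊗[k] H) :
    Ψ₁ f (p ⊗ₜ[k] w) = f p • w := by
  simp [Ψ₁]

/-- `Ψ₂ g (w ⊗ r) = g r • w`. -/
noncomputable def Ψ₂ (g : H →ₗ[k] k) : (H ⊗[k] H) ⊗[k] H →ₗ[k] H ⊗[k] H :=
  (TensorProduct.rid k (H ⊗[k] H)).toLinearMap ∘ₗ LinearMap.lTensor (H ⊗[k] H) g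

@[simp] lemma Ψ₂_tmul (g : H →ₗ[k] k) (w : H ⊗[k] H) (r : H) :
    Ψ₂ g (w ⊗ₜ[k] r) = g r • w := by
  simp [Ψ₂]

section Rep

variable (S : Finset (H × H)) (hS : W.comul (1 : H) = ∑ i ∈ S, i.1 ⊗ₜ[k] i.2)

include hS

lemma εt_apply (h : H) : W.εt h = ∑ i ∈ S, W.counit (i.1 * h) • i.2 := by
  simp only [εt, LinearMap.coe_comp, LinearEquiv.coe_coe, Function.comp_apply,
    AlgHom.toLinearMap_apply, Algebra.TensorProduct.includeLeft_apply,
    LinearMap.mulLeft_apply]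
  rw [hS, Finset.sum_mul]
  simp [Algebra.TensorProduct.tmul_mul_tmul]

lemma εs_apply (h : H) : W.εs h = ∑ i ∈ S, W.counit (h * i.2) • i.1 := by
  simp only [εs, LinearMap.coe_comp, LinearEquiv.coe_coe, Function.comp_apply,
    AlgHom.toLinearMap_apply, Algebra.TensorProduct.includeRight_apply,
    LinearMap.mulRight_apply]
  rw [hS, Finset.mul_sum]
  simp [Algebra.TensorProduct.tmul_mul_tmul]

lemma εt'_apply (h : H) : W.εt' h = ∑ i ∈ S, W.counit (h * i.1) • i.2 := by
  simp only [εt', LinearMap.coe_comp, LinearEquiv.coe_coe, Function.comp_apply,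
    AlgHom.toLinearMap_apply, Algebra.TensorProduct.includeLeft_apply,
    LinearMap.mulRight_apply]
  rw [hS, Finset.mul_sum]
  simp [Algebra.TensorProduct.tmul_mul_tmul]

lemma εs'_apply (h : H) : W.εs' h = ∑ i ∈ S, W.counit (i.2 * h) • i.1 := by
  simp only [εs', LinearMap.coe_comp, LinearEquiv.coe_coe, Function.comp_apply,
    AlgHom.toLinearMap_apply, Algebra.TensorProduct.includeRight_apply,
    LinearMap.mulLeft_apply]
  rw [hS, Finset.sum_mul]
  simp [Algebra.TensorProduct.tmul_mul_tmul]

lemma C1 (x y : H) :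
    W.counit (x * y) = ∑ i ∈ S, W.counit (x * i.1) * W.counit (i.2 * y) := by
  have h := W.weak_counit₁ x 1 y
  rw [mul_one, hS, Finset.mul_sum, Finset.sum_mul, map_sum, map_sum] at h
  rw [h]
  refine Finset.sum_congr rfl fun i _ => ?_
  simp [Algebra.TensorProduct.tmul_mul_tmul]

lemma C2 (x y : H) :
    W.counit (x * y) = ∑ i ∈ S, W.counit (x * i.2) * W.counit (i.1 * y) := by
  have h := W.weak_counit₂ x 1 y
  rw [mul_one, hS, map_sum] at h
  simp only [TensorProduct.comm_tmul] at h
  rw [Finset.mul_sum, Finset.sum_mul, map_sum, map_sum] at h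
  rw [h]
  refine Finset.sum_congr rfl fun i _ => ?_
  simp [Algebra.TensorProduct.tmul_mul_tmul]

lemma hE_eq : (W.comul.lTensor H) (W.comul 1) = ∑ i ∈ S, i.1 ⊗ₜ[k] (W.comul i.2) := by
  rw [hS, map_sum]
  simp [LinearMap.lTensor_tmul]

lemma hF_eq : (W.comul.rTensor H) (W.comul 1) = ∑ i ∈ S, (W.comul i.1) ⊗ₜ[k] i.2 := by
  rw [hS, map_sum]
  simp [LinearMap.rTensor_tmul]

lemma EA : ∑ i ∈ S, i.1 ⊗ₜ[k] (W.comul i.2)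
    = ∑ i ∈ S, ∑ j ∈ S, i.1 ⊗ₜ[k] ((i.2 * j.1) ⊗ₜ[k] j.2) := by
  rw [← W.hE_eq S hS, W.weak_unit_left, hS, map_sum, map_sum, Finset.sum_mul_sum]
  simp [Algebra.TensorProduct.map_tmul, Algebra.TensorProduct.includeRight_apply,
    Algebra.TensorProduct.includeLeft_apply, Algebra.TensorProduct.tmul_mul_tmul]

lemma EB : ∑ i ∈ S, i.1 ⊗ₜ[k] (W.comul i.2)
    = ∑ i ∈ S, ∑ j ∈ S, i.1 ⊗ₜ[k] ((j.1 * i.2) ⊗ₜ[k] j.2) := by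
  rw [← W.hE_eq S hS, W.weak_unit_right, hS, map_sum, map_sum, Finset.sum_mul_sum]
  rw [Finset.sum_comm]
  simp [Algebra.TensorProduct.map_tmul, Algebra.TensorProduct.includeRight_apply,
    Algebra.TensorProduct.includeLeft_apply, Algebra.TensorProduct.tmul_mul_tmul]

lemma FA : ∑ i ∈ S, (W.comul i.1) ⊗ₜ[k] i.2
    = ∑ i ∈ S, ∑ j ∈ S, (i.1 ⊗ₜ[k] (i.2 * j.1)) ⊗ₜ[k] j.2 := by
  have h := congrArg (TensorProduct.assoc k H H H).symm (W.coassoc 1)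
  rw [LinearEquiv.symm_apply_apply, W.hF_eq S hS, W.hE_eq S hS, W.EA S hS] at h
  rw [h, map_sum]
  simp [TensorProduct.assoc_symm_tmul, map_sum]

lemma FB : ∑ i ∈ S, (W.comul i.1) ⊗ₜ[k] i.2
    = ∑ i ∈ S, ∑ j ∈ S, (i.1 ⊗ₜ[k] (j.1 * i.2)) ⊗ₜ[k] j.2 := by
  have h := congrArg (TensorProduct.assoc k H H H).symm (W.coassoc 1)
  rw [LinearEquiv.symm_apply_apply, W.hF_eq S hS, W.hE_eq S hS, W.EB S hS] at h
  rw [h, map_sum]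
  simp [TensorProduct.assoc_symm_tmul, map_sum]

omit hS in
lemma counit_mul_smulsum (p : H) (c : H × H → k) (v : H × H → H) :
    W.counit (p * ∑ i ∈ S, c i • v i) = ∑ i ∈ S, c i * W.counit (p * v i) := by
  rw [Finset.mul_sum, map_sum]
  refine Finset.sum_congr rfl fun i _ => ?_
  rw [mul_smul_comm, map_smul, smul_eq_mul]

omit hS in
lemma counit_smulsum_mul (p : H) (c : H × H → k) (v : H × H → H) :
    W.counit ((∑ i ∈ S, c i • v i) * p) = ∑ i ∈ S, c i * W.counit (v i * p) := by
  rw [Finset.sum_mul, map_sum]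
  refine Finset.sum_congr rfl fun i _ => ?_
  rw [smul_mul_assoc, map_smul, smul_eq_mul]

lemma εt_εt (h : H) : W.εt (W.εt h) = W.εt h := by
  have key := congrArg (W.Φ₁ (W.counit ∘ₗ LinearMap.mulRight k h)) (W.EB S hS)
  simp only [map_sum, Φ₁_tmul, Jl_comul, Jl_tmul, LinearMap.coe_comp,
    Function.comp_apply, LinearMap.mulRight_apply] at key
  rw [W.εt_apply S hS (W.εt h), W.εt_apply S hS h]
  calc ∑ j ∈ S, W.counit (j.1 * ∑ i ∈ S, W.counit (i.1 * h) • i.2) • j.2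
      = ∑ j ∈ S, ∑ i ∈ S, W.counit (i.1 * h) • (W.counit (j.1 * i.2) • j.2) := by
        refine Finset.sum_congr rfl fun j _ => ?_
        rw [W.counit_mul_smulsum S, Finset.sum_smul]
        exact Finset.sum_congr rfl fun i _ => mul_smul _ _ _
    _ = ∑ i ∈ S, ∑ j ∈ S, W.counit (i.1 * h) • (W.counit (j.1 * i.2) • j.2) :=
        Finset.sum_comm
    _ = ∑ i ∈ S, W.counit (i.1 * h) • i.2 := key.symm

lemma εt_εt' (h : H) : W.εt (W.εt' h) = W.εt' h := by
  have key := congrArg (W.Φ₁ (W.counit ∘ₗ LinearMap.mulLeft k h)) (W.EB S hS)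
  simp only [map_sum, Φ₁_tmul, Jl_comul, Jl_tmul, LinearMap.coe_comp,
    Function.comp_apply, LinearMap.mulLeft_apply] at key
  rw [W.εt_apply S hS (W.εt' h), W.εt'_apply S hS h]
  calc ∑ j ∈ S, W.counit (j.1 * ∑ i ∈ S, W.counit (h * i.1) • i.2) • j.2
      = ∑ j ∈ S, ∑ i ∈ S, W.counit (h * i.1) • (W.counit (j.1 * i.2) • j.2) := by
        refine Finset.sum_congr rfl fun j _ => ?_
        rw [W.counit_mul_smulsum S, Finset.sum_smul]
        exact Finset.sum_congr rfl fun i _ => mul_smul _ _ _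
    _ = ∑ i ∈ S, ∑ j ∈ S, W.counit (h * i.1) • (W.counit (j.1 * i.2) • j.2) :=
        Finset.sum_comm
    _ = ∑ i ∈ S, W.counit (h * i.1) • i.2 := key.symm

lemma εt'_εt (h : H) : W.εt' (W.εt h) = W.εt h := by
  have key := congrArg (W.Φ₁ (W.counit ∘ₗ LinearMap.mulRight k h)) (W.EA S hS)
  simp only [map_sum, Φ₁_tmul, Jl_comul, Jl_tmul, LinearMap.coe_comp,
    Function.comp_apply, LinearMap.mulRight_apply] at key
  rw [W.εt'_apply S hS (W.εt h), W.εt_apply S hS h]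
  calc ∑ j ∈ S, W.counit ((∑ i ∈ S, W.counit (i.1 * h) • i.2) * j.1) • j.2
      = ∑ j ∈ S, ∑ i ∈ S, W.counit (i.1 * h) • (W.counit (i.2 * j.1) • j.2) := by
        refine Finset.sum_congr rfl fun j _ => ?_
        rw [W.counit_smulsum_mul S, Finset.sum_smul]
        exact Finset.sum_congr rfl fun i _ => mul_smul _ _ _
    _ = ∑ i ∈ S, ∑ j ∈ S, W.counit (i.1 * h) • (W.counit (i.2 * j.1) • j.2) :=
        Finset.sum_comm
    _ = ∑ i ∈ S, W.counit (i.1 * h) • i.2 := key.symm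

lemma εs_εs (h : H) : W.εs (W.εs h) = W.εs h := by
  have key := congrArg (W.Φ₂ (W.counit ∘ₗ LinearMap.mulLeft k h)) (W.EB S hS)
  simp only [map_sum, Φ₂_tmul, Jl_comul, Jl_tmul, LinearMap.coe_comp,
    Function.comp_apply, LinearMap.mulLeft_apply, map_smul, smul_eq_mul] at key
  rw [W.εs_apply S hS (W.εs h), W.εs_apply S hS h]
  calc ∑ i ∈ S, W.counit ((∑ j ∈ S, W.counit (h * j.2) • j.1) * i.2) • i.1
      = ∑ i ∈ S, ∑ j ∈ S, (W.counit (j.1 * i.2) * W.counit (h * j.2)) • i.1 := by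
        refine Finset.sum_congr rfl fun i _ => ?_
        rw [W.counit_smulsum_mul S, Finset.sum_smul]
        exact Finset.sum_congr rfl fun j _ => by rw [mul_comm]
    _ = ∑ i ∈ S, W.counit (h * i.2) • i.1 := key.symm

lemma εs_εs' (h : H) : W.εs (W.εs' h) = W.εs' h := by
  have key := congrArg (W.Φ₂ (W.counit ∘ₗ LinearMap.mulRight k h)) (W.EB S hS)
  simp only [map_sum, Φ₂_tmul, Jl_comul, Jl_tmul, LinearMap.coe_comp,
    Function.comp_apply, LinearMap.mulRight_apply, map_smul, smul_eq_mul] at key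
  rw [W.εs_apply S hS (W.εs' h), W.εs'_apply S hS h]
  calc ∑ i ∈ S, W.counit ((∑ j ∈ S, W.counit (j.2 * h) • j.1) * i.2) • i.1
      = ∑ i ∈ S, ∑ j ∈ S, (W.counit (j.1 * i.2) * W.counit (j.2 * h)) • i.1 := by
        refine Finset.sum_congr rfl fun i _ => ?_
        rw [W.counit_smulsum_mul S, Finset.sum_smul]
        exact Finset.sum_congr rfl fun j _ => by rw [mul_comm]
    _ = ∑ i ∈ S, W.counit (i.2 * h) • i.1 := key.symm

lemma εs'_εs (h : H) : W.εs' (W.εs h) = W.εs h := by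
  have key := congrArg (W.Φ₂ (W.counit ∘ₗ LinearMap.mulLeft k h)) (W.EA S hS)
  simp only [map_sum, Φ₂_tmul, Jl_comul, Jl_tmul, LinearMap.coe_comp,
    Function.comp_apply, LinearMap.mulLeft_apply, map_smul, smul_eq_mul] at key
  rw [W.εs'_apply S hS (W.εs h), W.εs_apply S hS h]
  calc ∑ i ∈ S, W.counit (i.2 * ∑ j ∈ S, W.counit (h * j.2) • j.1) • i.1
      = ∑ i ∈ S, ∑ j ∈ S, (W.counit (i.2 * j.1) * W.counit (h * j.2)) • i.1 := by
        refine Finset.sum_congr rfl fun i _ => ?_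
        rw [W.counit_mul_smulsum S, Finset.sum_smul]
        exact Finset.sum_congr rfl fun j _ => by rw [mul_comm]
    _ = ∑ i ∈ S, W.counit (h * i.2) • i.1 := key.symm

lemma εt_εs' (h : H) : W.εt (W.εs' h) = W.εt h := by
  rw [W.εt_apply S hS (W.εs' h), W.εs'_apply S hS h, W.εt_apply S hS h]
  refine Finset.sum_congr rfl fun i _ => ?_
  congr 1
  rw [W.counit_mul_smulsum S, W.C1 S hS i.1 h]
  exact Finset.sum_congr rfl fun j _ => mul_comm _ _

lemma εs'_εt (h : H) : W.εs' (W.εt h) = W.εs' h := by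
  rw [W.εs'_apply S hS (W.εt h), W.εt_apply S hS h, W.εs'_apply S hS h]
  refine Finset.sum_congr rfl fun j _ => ?_
  congr 1
  rw [W.counit_mul_smulsum S, W.C2 S hS j.2 h]
  exact Finset.sum_congr rfl fun i _ => mul_comm _ _

lemma εs_εt' (h : H) : W.εs (W.εt' h) = W.εs h := by
  rw [W.εs_apply S hS (W.εt' h), W.εt'_apply S hS h, W.εs_apply S hS h]
  refine Finset.sum_congr rfl fun i _ => ?_
  congr 1
  rw [W.counit_smulsum_mul S, W.C1 S hS h i.2]

lemma εt'_εs (h : H) : W.εt' (W.εs h) = W.εt' h := by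
  rw [W.εt'_apply S hS (W.εs h), W.εs_apply S hS h, W.εt'_apply S hS h]
  refine Finset.sum_congr rfl fun j _ => ?_
  congr 1
  rw [W.counit_smulsum_mul S, W.C2 S hS h j.1]

lemma εt_mul_absorb (g h : H) : W.εt (g * h) = W.εt (g * W.εt h) := by
  rw [W.εt_apply S hS (g * h), W.εt_apply S hS (g * W.εt h)]
  refine Finset.sum_congr rfl fun i _ => ?_
  congr 1
  rw [W.εt_apply S hS h, ← mul_assoc, ← mul_assoc, W.counit_mul_smulsum S,
    W.C2 S hS (i.1 * g) h]
  exact Finset.sum_congr rfl fun j _ => mul_comm _ _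

lemma εs_mul_absorb (g h : H) : W.εs (g * h) = W.εs (W.εs g * h) := by
  rw [W.εs_apply S hS (g * h), W.εs_apply S hS (W.εs g * h)]
  refine Finset.sum_congr rfl fun i _ => ?_
  congr 1
  rw [W.εs_apply S hS g, mul_assoc, mul_assoc, W.counit_smulsum_mul S,
    W.C2 S hS g (h * i.2)]

lemma εt_mul_εs (u v : H) : W.εt u * W.εs v = W.εs v * W.εt u := by
  have key := congrArg (Θ (W.counit ∘ₗ LinearMap.mulRight k u)
      (W.counit ∘ₗ LinearMap.mulLeft k v)) ((W.EA S hS).symm.trans (W.EB S hS))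
  simp only [map_sum, Θ_tmul, LinearMap.coe_comp, Function.comp_apply,
    LinearMap.mulRight_apply, LinearMap.mulLeft_apply] at key
  have l1 : W.εt u * W.εs v
      = ∑ i ∈ S, ∑ j ∈ S, W.counit (i.1 * u) • (W.counit (v * j.2) • (i.2 * j.1)) := by
    rw [W.εt_apply S hS u, W.εs_apply S hS v, Finset.sum_mul_sum]
    simp only [smul_mul_assoc, mul_smul_comm]
    refine Finset.sum_congr rfl fun i _ => Finset.sum_congr rfl fun j _ => ?_
    rw [smul_comm]
  have l2 : W.εs v * W.εt u
      = ∑ i ∈ S, ∑ j ∈ S, W.counit (i.1 * u) • (W.counit (v * j.2) • (j.1 * i.2)) := by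
    rw [W.εt_apply S hS u, W.εs_apply S hS v, Finset.sum_mul_sum, Finset.sum_comm]
    simp only [smul_mul_assoc, mul_smul_comm]
  rw [l1, l2, key]

lemma K2 (h : H) : W.comul (W.εt h) = (W.εt h ⊗ₜ[k] (1 : H)) * W.comul 1 := by
  have key := congrArg (Ψ₁ (W.counit ∘ₗ LinearMap.mulRight k h)) (W.EA S hS)
  simp only [map_sum, Ψ₁_tmul, LinearMap.coe_comp, Function.comp_apply,
    LinearMap.mulRight_apply] at key
  have l1 : W.comul (W.εt h) = ∑ i ∈ S, W.counit (i.1 * h) • W.comul i.2 := by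
    rw [W.εt_apply S hS h, map_sum]
    simp only [map_smul]
  have l2 : (W.εt h ⊗ₜ[k] (1 : H)) * W.comul 1
      = ∑ i ∈ S, ∑ j ∈ S, W.counit (i.1 * h) • ((i.2 * j.1) ⊗ₜ[k] j.2) := by
    rw [W.εt_apply S hS h, hS, TensorProduct.sum_tmul, Finset.sum_mul_sum]
    simp only [TensorProduct.smul_tmul', smul_mul_assoc,
      Algebra.TensorProduct.tmul_mul_tmul, one_mul]
  rw [l1, l2, key]

lemma K2' (h : H) : W.comul (W.εt h) = W.comul 1 * (W.εt h ⊗ₜ[k] (1 : H)) := by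
  have key := congrArg (Ψ₁ (W.counit ∘ₗ LinearMap.mulRight k h)) (W.EB S hS)
  simp only [map_sum, Ψ₁_tmul, LinearMap.coe_comp, Function.comp_apply,
    LinearMap.mulRight_apply] at key
  have l1 : W.comul (W.εt h) = ∑ i ∈ S, W.counit (i.1 * h) • W.comul i.2 := by
    rw [W.εt_apply S hS h, map_sum]
    simp only [map_smul]
  have l2 : W.comul 1 * (W.εt h ⊗ₜ[k] (1 : H))
      = ∑ i ∈ S, ∑ j ∈ S, W.counit (i.1 * h) • ((j.1 * i.2) ⊗ₜ[k] j.2) := by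
    rw [W.εt_apply S hS h, hS, TensorProduct.sum_tmul, Finset.sum_mul_sum, Finset.sum_comm]
    simp only [TensorProduct.smul_tmul', mul_smul_comm,
      Algebra.TensorProduct.tmul_mul_tmul, mul_one]
  rw [l1, l2, key]

lemma K1 (h : H) : W.comul (W.εs h) = ((1 : H) ⊗ₜ[k] W.εs h) * W.comul 1 := by
  have key := congrArg (Ψ₂ (W.counit ∘ₗ LinearMap.mulLeft k h)) (W.FB S hS)
  simp only [map_sum, Ψ₂_tmul, LinearMap.coe_comp, Function.comp_apply,
    LinearMap.mulLeft_apply] at key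
  have l1 : W.comul (W.εs h) = ∑ i ∈ S, W.counit (h * i.2) • W.comul i.1 := by
    rw [W.εs_apply S hS h, map_sum]
    simp only [map_smul]
  have l2 : ((1 : H) ⊗ₜ[k] W.εs h) * W.comul 1
      = ∑ i ∈ S, ∑ j ∈ S, W.counit (h * j.2) • (i.1 ⊗ₜ[k] (j.1 * i.2)) := by
    rw [W.εs_apply S hS h, hS, TensorProduct.tmul_sum, Finset.sum_mul_sum, Finset.sum_comm]
    simp only [TensorProduct.tmul_smul, smul_mul_assoc,
      Algebra.TensorProduct.tmul_mul_tmul, one_mul]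
  rw [l1, l2, key]

lemma K1' (h : H) : W.comul (W.εs h) = W.comul 1 * ((1 : H) ⊗ₜ[k] W.εs h) := by
  have key := congrArg (Ψ₂ (W.counit ∘ₗ LinearMap.mulLeft k h)) (W.FA S hS)
  simp only [map_sum, Ψ₂_tmul, LinearMap.coe_comp, Function.comp_apply,
    LinearMap.mulLeft_apply] at key
  have l1 : W.comul (W.εs h) = ∑ i ∈ S, W.counit (h * i.2) • W.comul i.1 := by
    rw [W.εs_apply S hS h, map_sum]
    simp only [map_smul]
  have l2 : W.comul 1 * ((1 : H) ⊗ₜ[k] W.εs h)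
      = ∑ i ∈ S, ∑ j ∈ S, W.counit (h * j.2) • (i.1 ⊗ₜ[k] (i.2 * j.1)) := by
    rw [W.εs_apply S hS h, hS, TensorProduct.tmul_sum, Finset.sum_mul_sum]
    simp only [TensorProduct.tmul_smul, mul_smul_comm,
      Algebra.TensorProduct.tmul_mul_tmul, mul_one]
  rw [l1, l2, key]

omit hS in
lemma comul_one_sq : W.comul 1 * W.comul 1 = W.comul (1 : H) := by
  have h := W.comul_mul 1 1
  rw [mul_one] at h
  exact h.symm

lemma closure_t (u v : H) : W.εt (W.εt u * W.εt v) = W.εt u * W.εt v := by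
  have hcomm : W.comul 1 * (W.εt v ⊗ₜ[k] (1 : H)) = (W.εt v ⊗ₜ[k] (1 : H)) * W.comul 1 :=
    (W.K2' S hS v).symm.trans (W.K2 S hS v)
  have hxy : W.comul (W.εt u * W.εt v)
      = ((W.εt u * W.εt v) ⊗ₜ[k] (1 : H)) * W.comul 1 := by
    rw [W.comul_mul, W.K2 S hS u, W.K2' S hS v, mul_assoc,
      ← mul_assoc (W.comul 1) (W.comul 1), W.comul_one_sq, hcomm, ← mul_assoc,
      Algebra.TensorProduct.tmul_mul_tmul, mul_one]
  have h2 := congrArg W.Jl hxy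
  rw [Jl_comul, hS, Finset.mul_sum] at h2
  have h3 : W.Jl (∑ i ∈ S, ((W.εt u * W.εt v) ⊗ₜ[k] (1 : H)) * (i.1 ⊗ₜ[k] i.2))
      = W.εt' (W.εt u * W.εt v) := by
    rw [W.εt'_apply S hS (W.εt u * W.εt v), map_sum]
    refine Finset.sum_congr rfl fun i _ => ?_
    rw [Algebra.TensorProduct.tmul_mul_tmul, one_mul, Jl_tmul]
  rw [h3] at h2
  calc W.εt (W.εt u * W.εt v) = W.εt (W.εt' (W.εt u * W.εt v)) := by rw [← h2]
    _ = W.εt' (W.εt u * W.εt v) := W.εt_εt' S hS _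
    _ = W.εt u * W.εt v := h2.symm

lemma closure_s (u v : H) : W.εs (W.εs u * W.εs v) = W.εs u * W.εs v := by
  have hcomm : W.comul 1 * ((1 : H) ⊗ₜ[k] W.εs v) = ((1 : H) ⊗ₜ[k] W.εs v) * W.comul 1 :=
    (W.K1' S hS v).symm.trans (W.K1 S hS v)
  have hxy : W.comul (W.εs u * W.εs v)
      = ((1 : H) ⊗ₜ[k] (W.εs u * W.εs v)) * W.comul 1 := by
    rw [W.comul_mul, W.K1 S hS u, W.K1' S hS v, mul_assoc,
      ← mul_assoc (W.comul 1) (W.comul 1), W.comul_one_sq, hcomm, ← mul_assoc,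
      Algebra.TensorProduct.tmul_mul_tmul, mul_one]
  have h2 := congrArg W.Jr hxy
  rw [Jr_comul, hS, Finset.mul_sum] at h2
  have h3 : W.Jr (∑ i ∈ S, ((1 : H) ⊗ₜ[k] (W.εs u * W.εs v)) * (i.1 ⊗ₜ[k] i.2))
      = W.εs (W.εs u * W.εs v) := by
    rw [W.εs_apply S hS (W.εs u * W.εs v), map_sum]
    refine Finset.sum_congr rfl fun i _ => ?_
    rw [Algebra.TensorProduct.tmul_mul_tmul, one_mul, Jr_tmul]
  rw [h3] at h2
  exact h2.symm

lemma εs'_one : W.εs' (1 : H) = 1 := by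
  rw [W.εs'_apply S hS 1]
  have h := W.counit_right 1
  rw [hS, map_sum, map_sum] at h
  simpa [LinearMap.lTensor_tmul, TensorProduct.rid_tmul] using h

lemma εt'_one : W.εt' (1 : H) = 1 := by
  rw [W.εt'_apply S hS 1]
  have h := W.counit_left 1
  rw [hS, map_sum, map_sum] at h
  simpa [LinearMap.rTensor_tmul, TensorProduct.lid_tmul] using h


end Rep

end WeakBialgebra

/-- `ε̄_s` restricts to an anti-algebra isomorphism `H_t → H_s` with inverse `ε_t`,
and `ε̄_t` restricts to an anti-algebra isomorphism `H_s → H_t` with inverse `ε_s`. -/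
theorem weakBialgebra_antiIso_target_source
    {k H : Type*} [CommRing k] [Ring H] [Algebra k H] (W : WeakBialgebra k H) :
    (∀ x ∈ Set.range W.εt, W.εs' x ∈ Set.range W.εs) ∧
    (∀ x ∈ Set.range W.εt, W.εt (W.εs' x) = x) ∧
    (∀ y ∈ Set.range W.εs, W.εs' (W.εt y) = y) ∧
    (∀ x ∈ Set.range W.εt, ∀ y ∈ Set.range W.εt, W.εs' (x * y) = W.εs' y * W.εs' x) ∧
    W.εs' 1 = 1 ∧
    (∀ y ∈ Set.range W.εs, W.εt' y ∈ Set.range W.εt) ∧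
    (∀ y ∈ Set.range W.εs, W.εs (W.εt' y) = y) ∧
    (∀ x ∈ Set.range W.εt, W.εt' (W.εs x) = x) ∧
    (∀ x ∈ Set.range W.εs, ∀ y ∈ Set.range W.εs, W.εt' (x * y) = W.εt' y * W.εt' x) ∧
    W.εt' 1 = 1 := by
  obtain ⟨S, hS⟩ := TensorProduct.exists_finset (W.comul 1)
  refine ⟨?_, ?_, ?_, ?_, W.εs'_one S hS, ?_, ?_, ?_, ?_, W.εt'_one S hS⟩
  · rintro x ⟨u, rfl⟩
    exact ⟨W.εs' (W.εt u), W.εs_εs' S hS _⟩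
  · rintro x ⟨u, rfl⟩
    rw [W.εt_εs' S hS, W.εt_εt S hS]
  · rintro y ⟨v, rfl⟩
    rw [W.εs'_εt S hS, W.εs'_εs S hS]
  · rintro x ⟨u, rfl⟩ y ⟨v, rfl⟩
    have hL : W.εt (W.εs' (W.εt u * W.εt v)) = W.εt u * W.εt v := by
      rw [W.εt_εs' S hS]
      exact W.closure_t S hS u v
    have hcomm : W.εs' (W.εt v) * W.εt u = W.εt u * W.εs' (W.εt v) := by
      rw [show W.εs' (W.εt v) = W.εs (W.εs' (W.εt v)) from (W.εs_εs' S hS _).symm]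
      exact (W.εt_mul_εs S hS u (W.εs' (W.εt v))).symm
    have hR : W.εt (W.εs' (W.εt v) * W.εs' (W.εt u)) = W.εt u * W.εt v := by
      rw [W.εt_mul_absorb S hS (W.εs' (W.εt v)) (W.εs' (W.εt u)),
        W.εt_εs' S hS (W.εt u), W.εt_εt S hS u, hcomm,
        W.εt_mul_absorb S hS (W.εt u) (W.εs' (W.εt v)),
        W.εt_εs' S hS (W.εt v), W.εt_εt S hS v]
      exact W.closure_t S hS u v
    have hLs : W.εs (W.εs' (W.εt u * W.εt v)) = W.εs' (W.εt u * W.εt v) :=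
      W.εs_εs' S hS _
    have hRs : W.εs (W.εs' (W.εt v) * W.εs' (W.εt u)) = W.εs' (W.εt v) * W.εs' (W.εt u) := by
      have h := W.closure_s S hS (W.εs' (W.εt v)) (W.εs' (W.εt u))
      rwa [W.εs_εs' S hS (W.εt v), W.εs_εs' S hS (W.εt u)] at h
    have hL2 : W.εs' (W.εs' (W.εt u * W.εt v)) = W.εs' (W.εt u * W.εt v) := by
      conv_lhs => rw [← hLs]
      rw [W.εs'_εs S hS]
      exact hLs
    have hR2 : W.εs' (W.εs' (W.εt v) * W.εs' (W.εt u))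
        = W.εs' (W.εt v) * W.εs' (W.εt u) := by
      conv_lhs => rw [← hRs]
      rw [W.εs'_εs S hS]
      exact hRs
    calc W.εs' (W.εt u * W.εt v)
        = W.εs' (W.εs' (W.εt u * W.εt v)) := hL2.symm
      _ = W.εs' (W.εt (W.εs' (W.εt u * W.εt v))) := by rw [W.εs'_εt S hS]
      _ = W.εs' (W.εt (W.εs' (W.εt v) * W.εs' (W.εt u))) := by rw [hL, ← hR]
      _ = W.εs' (W.εs' (W.εt v) * W.εs' (W.εt u)) := by rw [W.εs'_εt S hS]
      _ = W.εs' (W.εt v) * W.εs' (W.εt u) := hR2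
  · rintro y ⟨v, rfl⟩
    exact ⟨W.εt' (W.εs v), W.εt_εt' S hS _⟩
  · rintro y ⟨v, rfl⟩
    rw [W.εs_εt' S hS, W.εs_εs S hS]
  · rintro x ⟨u, rfl⟩
    rw [W.εt'_εs S hS, W.εt'_εt S hS]
  · rintro x ⟨u, rfl⟩ y ⟨v, rfl⟩
    have hL : W.εs (W.εt' (W.εs u * W.εs v)) = W.εs u * W.εs v := by
      rw [W.εs_εt' S hS]
      exact W.closure_s S hS u v
    have hcomm : W.εs v * W.εt' (W.εs u) = W.εt' (W.εs u) * W.εs v := by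
      rw [show W.εt' (W.εs u) = W.εt (W.εt' (W.εs u)) from (W.εt_εt' S hS _).symm]
      exact (W.εt_mul_εs S hS (W.εt' (W.εs u)) v).symm
    have hR : W.εs (W.εt' (W.εs v) * W.εt' (W.εs u)) = W.εs u * W.εs v := by
      rw [W.εs_mul_absorb S hS (W.εt' (W.εs v)) (W.εt' (W.εs u)),
        W.εs_εt' S hS (W.εs v), W.εs_εs S hS v, hcomm,
        W.εs_mul_absorb S hS (W.εt' (W.εs u)) (W.εs v),
        W.εs_εt' S hS (W.εs u), W.εs_εs S hS u]
      exact W.closure_s S hS u v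
    have hLt : W.εt (W.εt' (W.εs u * W.εs v)) = W.εt' (W.εs u * W.εs v) :=
      W.εt_εt' S hS _
    have hRt : W.εt (W.εt' (W.εs v) * W.εt' (W.εs u)) = W.εt' (W.εs v) * W.εt' (W.εs u) := by
      have h := W.closure_t S hS (W.εt' (W.εs v)) (W.εt' (W.εs u))
      rwa [W.εt_εt' S hS (W.εs v), W.εt_εt' S hS (W.εs u)] at h
    have hL2 : W.εt' (W.εt' (W.εs u * W.εs v)) = W.εt' (W.εs u * W.εs v) := by
      conv_lhs => rw [← hLt]
      rw [W.εt'_εt S hS]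
      exact hLt
    have hR2 : W.εt' (W.εt' (W.εs v) * W.εt' (W.εs u))
        = W.εt' (W.εs v) * W.εt' (W.εs u) := by
      conv_lhs => rw [← hRt]
      rw [W.εt'_εt S hS]
      exact hRt
    calc W.εt' (W.εs u * W.εs v)
        = W.εt' (W.εt' (W.εs u * W.εs v)) := hL2.symm
      _ = W.εt' (W.εs (W.εt' (W.εs u * W.εs v))) := by rw [W.εt'_εs S hS]
      _ = W.εt' (W.εs (W.εt' (W.εs v) * W.εt' (W.εs u))) := by rw [hL, ← hR]
      _ = W.εt' (W.εt' (W.εs v) * W.εt' (W.εs u)) := by rw [W.εt'_εs S hS]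
      _ = W.εt' (W.εs v) * W.εt' (W.εs u) := hR2
end

section
/- Let H be a weak bialgebra and M, N left H-modules. The projection π : M ⊗ N → Δ(1)(M ⊗ N), π(m ⊗ n) = 1_{(1)}m ⊗ 1_{(2)}n, induces an isomorphism M ⊗_{H_t} N ≅ Δ(1)(M ⊗ N), where the right H_t-module structure on M is given by m·z = ε̄_s(z)m with ε̄_s(z) = ε(1_{(2)}z)1_{(1)}. -/
open TensorProduct

section Modules

variable {k H M : Type*} [CommRing k] [Ring H] [Algebra k H]
  [AddCommGroup M] [Module k M] [Module H M] [IsScalarTower k H M]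

/-- The `k`-linear endomorphism of `M` given by the action of `b : H`. -/
def lsmulM (b : H) : M →ₗ[k] M where
  toFun m := b • m
  map_add' := smul_add b
  map_smul' c m := by
    simp only [RingHom.id_apply]
    rw [← algebraMap_smul H c m, ← algebraMap_smul H c (b • m), smul_smul, smul_smul,
      Algebra.commutes]

/-- The action `H →ₗ[k] End(M)` as a bundled linear map. -/
def lsmulL : H →ₗ[k] M →ₗ[k] M where
  toFun := lsmulM
  map_add' b b' := by ext m; simp [lsmulM, add_smul]
  map_smul' c b := by ext m; simp [lsmulM, smul_assoc]

end Modules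


section Aux

variable {k H : Type*} [CommRing k] [Ring H] [Algebra k H]
variable (W : WeakBialgebra k H)
variable {ι : Type*} (s : Finset ι) (u v : ι → H)

theorem eps_t_apply (hrep : W.comul 1 = ∑ i ∈ s, u i ⊗ₜ[k] v i) (h : H) :
    W.εt h = ∑ i ∈ s, W.counit (u i * h) • v i := by
  simp only [WeakBialgebra.εt, LinearMap.coe_comp, Function.comp_apply,
    AlgHom.toLinearMap_apply, Algebra.TensorProduct.includeLeft_apply,
    LinearMap.mulLeft_apply, hrep, Finset.sum_mul, Algebra.TensorProduct.tmul_mul_tmul,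
    mul_one, map_sum, LinearMap.rTensor_tmul, LinearEquiv.coe_coe, lid_tmul]

theorem eps_s'_apply (hrep : W.comul 1 = ∑ i ∈ s, u i ⊗ₜ[k] v i) (h : H) :
    W.εs' h = ∑ i ∈ s, W.counit (v i * h) • u i := by
  simp only [WeakBialgebra.εs', LinearMap.coe_comp, Function.comp_apply,
    AlgHom.toLinearMap_apply, Algebra.TensorProduct.includeRight_apply,
    LinearMap.mulLeft_apply, hrep, Finset.sum_mul, Algebra.TensorProduct.tmul_mul_tmul,
    one_mul, mul_one, map_sum, LinearMap.lTensor_tmul, LinearEquiv.coe_coe, rid_tmul]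

theorem wul_rep (hrep : W.comul 1 = ∑ i ∈ s, u i ⊗ₜ[k] v i) :
    ∑ i ∈ s, u i ⊗ₜ[k] W.comul (v i) =
      ∑ i ∈ s, ∑ j ∈ s, u i ⊗ₜ[k] ((v i * u j) ⊗ₜ[k] v j) := by
  have h := W.weak_unit_left
  rw [hrep] at h
  simpa only [map_sum, LinearMap.lTensor_tmul, Algebra.TensorProduct.map_tmul,
    AlgHom.coe_id, id_eq, Algebra.TensorProduct.includeLeft_apply,
    Algebra.TensorProduct.includeRight_apply, Finset.sum_mul_sum,
    Algebra.TensorProduct.tmul_mul_tmul, one_mul, mul_one] using h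

theorem wur_rep (hrep : W.comul 1 = ∑ i ∈ s, u i ⊗ₜ[k] v i) :
    ∑ i ∈ s, u i ⊗ₜ[k] W.comul (v i) =
      ∑ i ∈ s, ∑ j ∈ s, u i ⊗ₜ[k] ((u j * v i) ⊗ₜ[k] v j) := by
  have h := W.weak_unit_right
  rw [hrep] at h
  simp only [map_sum, LinearMap.lTensor_tmul, Algebra.TensorProduct.map_tmul,
    AlgHom.coe_id, id_eq, Algebra.TensorProduct.includeLeft_apply,
    Algebra.TensorProduct.includeRight_apply, Finset.sum_mul_sum,
    Algebra.TensorProduct.tmul_mul_tmul, one_mul, mul_one] at h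
  rw [h, Finset.sum_comm]

theorem D1_idem (hrep : W.comul 1 = ∑ i ∈ s, u i ⊗ₜ[k] v i) :
    (∑ i ∈ s, u i ⊗ₜ[k] v i) * (∑ i ∈ s, u i ⊗ₜ[k] v i) = ∑ i ∈ s, u i ⊗ₜ[k] v i := by
  rw [← hrep, ← W.comul_mul, mul_one]



/-- `phiL (a ⊗ b) = ε(a) • b`; kills `Δ x` to `x` by `counit_left`. -/
noncomputable def phiL : H ⊗[k] H →ₗ[k] H :=
  (TensorProduct.lid k H).toLinearMap ∘ₗ (W.counit.rTensor H)

theorem phiL_tmul (a b : H) : phiL W (a ⊗ₜ[k] b) = W.counit a • b := by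
  simp [phiL]

theorem phiL_comul (h : H) : phiL W (W.comul h) = h := by
  simpa [phiL] using W.counit_left h

/-- `phiR (a ⊗ b) = ε(b) • a`; kills `Δ x` to `x` by `counit_right`. -/
noncomputable def phiR : H ⊗[k] H →ₗ[k] H :=
  (TensorProduct.rid k H).toLinearMap ∘ₗ (W.counit.lTensor H)

theorem phiR_tmul (a b : H) : phiR W (a ⊗ₜ[k] b) = W.counit b • a := by
  simp [phiR]

theorem phiR_comul (h : H) : phiR W (W.comul h) = h := by
  simpa [phiR] using W.counit_right h

theorem counit_v_one (hrep : W.comul 1 = ∑ i ∈ s, u i ⊗ₜ[k] v i) :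
    ∑ i ∈ s, W.counit (v i) • u i = 1 := by
  have h := phiR_comul W 1
  rw [hrep, map_sum] at h
  simpa [phiR_tmul] using h

theorem counit_u_one (hrep : W.comul 1 = ∑ i ∈ s, u i ⊗ₜ[k] v i) :
    ∑ i ∈ s, W.counit (u i) • v i = 1 := by
  have h := phiL_comul W 1
  rw [hrep, map_sum] at h
  simpa [phiL_tmul] using h

/-- `(id ⊗ εt) Δ(1) = Δ(1)`. -/
theorem L2 (hrep : W.comul 1 = ∑ i ∈ s, u i ⊗ₜ[k] v i) :
    ∑ i ∈ s, u i ⊗ₜ[k] W.εt (v i) = ∑ i ∈ s, u i ⊗ₜ[k] v i := by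
  have h := congrArg (LinearMap.lTensor H (phiL W)) (wur_rep W s u v hrep)
  simp only [map_sum, LinearMap.lTensor_tmul, phiL_comul, phiL_tmul, tmul_smul] at h
  rw [h]
  refine Finset.sum_congr rfl fun i _ => ?_
  rw [eps_t_apply W s u v hrep, tmul_sum]
  exact Finset.sum_congr rfl fun j _ => by rw [tmul_smul]

/-- `(ε̄ₛ' ⊗ id) Δ(1) = Δ(1)`. -/
theorem L2' (hrep : W.comul 1 = ∑ i ∈ s, u i ⊗ₜ[k] v i) :
    ∑ i ∈ s, W.εs' (u i) ⊗ₜ[k] v i = ∑ i ∈ s, u i ⊗ₜ[k] v i := by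
  have h := congrArg (LinearMap.lTensor H (phiL W)) (wul_rep W s u v hrep)
  simp only [map_sum, LinearMap.lTensor_tmul, phiL_comul, phiL_tmul, tmul_smul] at h
  rw [h, Finset.sum_comm]
  refine Finset.sum_congr rfl fun j _ => ?_
  rw [eps_s'_apply W s u v hrep, sum_tmul]
  exact Finset.sum_congr rfl fun i _ => by rw [smul_tmul']

theorem coassoc_rep_L (hrep : W.comul 1 = ∑ i ∈ s, u i ⊗ₜ[k] v i) :
    ∑ i ∈ s, W.comul (u i) ⊗ₜ[k] v i =
      ∑ i ∈ s, ∑ j ∈ s, (u i ⊗ₜ[k] (v i * u j)) ⊗ₜ[k] v j := by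
  have h : (W.comul.rTensor H) (W.comul 1) =
      (TensorProduct.assoc k H H H).symm ((W.comul.lTensor H) (W.comul 1)) := by
    rw [← W.coassoc 1, LinearEquiv.symm_apply_apply]
  have hl : (W.comul.lTensor H) (W.comul 1) =
      ∑ i ∈ s, ∑ j ∈ s, u i ⊗ₜ[k] ((v i * u j) ⊗ₜ[k] v j) := by
    rw [hrep, map_sum]
    simp only [LinearMap.lTensor_tmul]
    exact wul_rep W s u v hrep
  rw [hl, hrep, map_sum] at h
  simpa only [map_sum, LinearMap.rTensor_tmul, assoc_symm_tmul] using h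

theorem coassoc_rep_R (hrep : W.comul 1 = ∑ i ∈ s, u i ⊗ₜ[k] v i) :
    ∑ i ∈ s, W.comul (u i) ⊗ₜ[k] v i =
      ∑ i ∈ s, ∑ j ∈ s, (u i ⊗ₜ[k] (u j * v i)) ⊗ₜ[k] v j := by
  have h : (W.comul.rTensor H) (W.comul 1) =
      (TensorProduct.assoc k H H H).symm ((W.comul.lTensor H) (W.comul 1)) := by
    rw [← W.coassoc 1, LinearEquiv.symm_apply_apply]
  have hl : (W.comul.lTensor H) (W.comul 1) =
      ∑ i ∈ s, ∑ j ∈ s, u i ⊗ₜ[k] ((u j * v i) ⊗ₜ[k] v j) := by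
    rw [hrep, map_sum]
    simp only [LinearMap.lTensor_tmul]
    exact wur_rep W s u v hrep
  rw [hl, hrep, map_sum] at h
  simpa only [map_sum, LinearMap.rTensor_tmul, assoc_symm_tmul] using h

/-- the linear map `(w ⊗ c) ↦ ε(c*a) • w` on `(H⊗H)⊗H`. -/
noncomputable def psiA (a : H) : (H ⊗[k] H) ⊗[k] H →ₗ[k] H ⊗[k] H :=
  (TensorProduct.rid k (H ⊗[k] H)).toLinearMap ∘ₗ
    LinearMap.lTensor (H ⊗[k] H) (W.counit ∘ₗ LinearMap.mulRight k a)

theorem psiA_tmul (a : H) (w : H ⊗[k] H) (c : H) :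
    psiA W a (w ⊗ₜ[k] c) = W.counit (c * a) • w := by
  simp [psiA]

/-- `Δ(ε̄ₛ' a) = Δ1 ⬝ (1 ⊗ ε̄ₛ' a)` in representation form. -/
theorem F5a (hrep : W.comul 1 = ∑ i ∈ s, u i ⊗ₜ[k] v i) (a : H) :
    ∑ i ∈ s, W.counit (v i * a) • W.comul (u i) =
      ∑ i ∈ s, u i ⊗ₜ[k] (v i * W.εs' a) := by
  have h := congrArg (psiA W a) (coassoc_rep_L W s u v hrep)
  simp only [map_sum, psiA_tmul] at h
  rw [h]
  refine Finset.sum_congr rfl fun i _ => ?_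
  rw [eps_s'_apply W s u v hrep, Finset.mul_sum, tmul_sum]
  exact Finset.sum_congr rfl fun j _ => by
    rw [mul_smul_comm, tmul_smul]

/-- `Δ(ε̄ₛ' a) = (1 ⊗ ε̄ₛ' a) ⬝ Δ1` in representation form. -/
theorem F5b (hrep : W.comul 1 = ∑ i ∈ s, u i ⊗ₜ[k] v i) (a : H) :
    ∑ i ∈ s, W.counit (v i * a) • W.comul (u i) =
      ∑ i ∈ s, u i ⊗ₜ[k] (W.εs' a * v i) := by
  have h := congrArg (psiA W a) (coassoc_rep_R W s u v hrep)
  simp only [map_sum, psiA_tmul] at h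
  rw [h]
  refine Finset.sum_congr rfl fun i _ => ?_
  rw [eps_s'_apply W s u v hrep, Finset.sum_mul, tmul_sum]
  exact Finset.sum_congr rfl fun j _ => by
    rw [smul_mul_assoc, tmul_smul]

/-- `Δ(εt h) = Δ1 ⬝ (εt h ⊗ 1)` in representation form (I6). -/
theorem F6 (hrep : W.comul 1 = ∑ i ∈ s, u i ⊗ₜ[k] v i) (h : H) :
    W.comul (W.εt h) = ∑ j ∈ s, (u j * W.εt h) ⊗ₜ[k] v j := by
  have key := congrArg ((TensorProduct.lid k (H ⊗[k] H)).toLinearMap ∘ₗ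
      LinearMap.rTensor (H ⊗[k] H) (W.counit ∘ₗ LinearMap.mulRight k h))
    (wur_rep W s u v hrep)
  simp only [map_sum, LinearMap.coe_comp, Function.comp_apply, LinearMap.rTensor_tmul,
    LinearMap.mulRight_apply, LinearEquiv.coe_coe, lid_tmul] at key
  have hL : ∑ i ∈ s, W.counit (u i * h) • W.comul (v i) = W.comul (W.εt h) := by
    rw [eps_t_apply W s u v hrep, map_sum]
    exact Finset.sum_congr rfl fun i _ => by rw [map_smul]
  rw [hL] at key
  rw [key, Finset.sum_comm]
  refine Finset.sum_congr rfl fun j _ => ?_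
  rw [eps_t_apply W s u v hrep, Finset.mul_sum, sum_tmul]
  exact Finset.sum_congr rfl fun i _ => by
    rw [mul_smul_comm, smul_tmul']

/-- scalar map `a ⊗ b ↦ ε(a)ε(b)`. -/
noncomputable def sc : H ⊗[k] H →ₗ[k] k :=
  (LinearMap.mul' k k) ∘ₗ (TensorProduct.map W.counit W.counit)

theorem sc_tmul (a b : H) : sc W (a ⊗ₜ[k] b) = W.counit a * W.counit b := by
  simp [sc]

theorem wc1 (h g l : H) :
    W.counit (h * g * l) = sc W ((h ⊗ₜ[k] 1) * W.comul g * (1 ⊗ₜ[k] l)) :=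
  W.weak_counit₁ h g l

/-- `θ l a (w) = ε-scalar of ((v l ⊗ 1) * w * (1 ⊗ a))`. -/
noncomputable def theta (x a : H) : H ⊗[k] H →ₗ[k] k :=
  sc W ∘ₗ LinearMap.mulRight k ((1 : H) ⊗ₜ[k] a) ∘ₗ LinearMap.mulLeft k (x ⊗ₜ[k] (1 : H))

theorem theta_apply (x a : H) (w : H ⊗[k] H) :
    theta W x a w = sc W ((x ⊗ₜ[k] (1 : H)) * w * ((1 : H) ⊗ₜ[k] a)) := rfl

theorem theta_tmul (x a c d : H) :
    theta W x a (c ⊗ₜ[k] d) = W.counit (x * c) * W.counit (d * a) := by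
  simp [theta, Algebra.TensorProduct.tmul_mul_tmul, sc_tmul]

/-- `Gmap c d e (T) = e ⊗ phiL ((c ⊗ d) * T)`. -/
noncomputable def Gmap (c d e : H) : H ⊗[k] H →ₗ[k] H ⊗[k] H :=
  (TensorProduct.mk k H H e) ∘ₗ (phiL W) ∘ₗ (LinearMap.mulLeft k (c ⊗ₜ[k] d))

theorem Gmap_apply (c d e : H) (T : H ⊗[k] H) :
    Gmap W c d e T = e ⊗ₜ[k] (phiL W ((c ⊗ₜ[k] d) * T)) := rfl

theorem Gmap_tmul (c d e a b : H) :
    Gmap W c d e (a ⊗ₜ[k] b) = W.counit (c * a) • (e ⊗ₜ[k] (d * b)) := by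
  rw [Gmap_apply, Algebra.TensorProduct.tmul_mul_tmul, phiL_tmul, tmul_smul]

/-- `Kab x b (w ⊗ c) = θ(w) • (x ⊗ (c * b))`. -/
noncomputable def Kab (x a b e : H) : (H ⊗[k] H) ⊗[k] H →ₗ[k] H ⊗[k] H :=
  (TensorProduct.mk k H H e) ∘ₗ (LinearMap.mulRight k b) ∘ₗ
    (TensorProduct.lid k H).toLinearMap ∘ₗ (LinearMap.rTensor H (theta W x a))

theorem Kab_tmul (x a b e : H) (w : H ⊗[k] H) (c : H) :
    Kab W x a b e (w ⊗ₜ[k] c) = theta W x a w • (e ⊗ₜ[k] (c * b)) := by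
  simp only [Kab, LinearMap.coe_comp, Function.comp_apply, LinearMap.rTensor_tmul,
    LinearEquiv.coe_coe, lid_tmul, map_smul, LinearMap.mulRight_apply, tmul_smul]
  rfl

/-- `Fmap j a b (x ⊗ w) = ε(u j * w * a) • (x ⊗ (d * b))` building block. -/
noncomputable def Fmap (c a e : H) : H ⊗[k] H →ₗ[k] H ⊗[k] H :=
  ((TensorProduct.mk k H H).flip e) ∘ₗ (TensorProduct.rid k H).toLinearMap ∘ₗ
    (LinearMap.lTensor H (W.counit ∘ₗ LinearMap.mulRight k a ∘ₗ LinearMap.mulLeft k c))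

theorem Fmap_tmul (c a e x w : H) :
    Fmap W c a e (x ⊗ₜ[k] w) = W.counit (c * w * a) • (x ⊗ₜ[k] e) := by
  simp only [Fmap, LinearMap.coe_comp, Function.comp_apply, LinearMap.lTensor_tmul,
    LinearMap.mulLeft_apply, LinearMap.mulRight_apply, LinearEquiv.coe_coe, rid_tmul,
    map_smul, LinearMap.flip_apply, TensorProduct.mk_apply, smul_tmul']

/-- Key computational lemma towards identity J. -/
theorem keyJ (hrep : W.comul 1 = ∑ i ∈ s, u i ⊗ₜ[k] v i) (T : H ⊗[k] H) :
    (W.εs'.rTensor H) ((∑ i ∈ s, u i ⊗ₜ[k] v i) * T) =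
      ∑ m ∈ s, ∑ j ∈ s, Gmap W (u j * v m) (v j) (u m) T := by
  induction T using TensorProduct.induction_on with
  | zero => simp
  | add x y hx hy =>
      simp only [mul_add, map_add, hx, hy, Finset.sum_add_distrib]
  | tmul a b =>
      have step1 : (W.εs'.rTensor H) ((∑ i ∈ s, u i ⊗ₜ[k] v i) * (a ⊗ₜ[k] b)) =
          ∑ i ∈ s, ∑ l ∈ s, W.counit (v l * (u i * a)) • (u l ⊗ₜ[k] (v i * b)) := by
        simp only [Finset.sum_mul, Algebra.TensorProduct.tmul_mul_tmul, map_sum,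
          LinearMap.rTensor_tmul]
        refine Finset.sum_congr rfl fun i _ => ?_
        rw [eps_s'_apply W s u v hrep, sum_tmul]
        exact Finset.sum_congr rfl fun l _ => by rw [smul_tmul']
      have step2 : ∀ l ∈ s, ∑ i ∈ s, W.counit (v l * (u i * a)) • (u l ⊗ₜ[k] (v i * b)) =
          ∑ m ∈ s, ∑ j ∈ s,
            (W.counit (v l * u m) * W.counit (u j * v m * a)) • (u l ⊗ₜ[k] (v j * b)) := by
        intro l _
        have hcongr := congrArg (Kab W (v l) a b (u l)) (coassoc_rep_R W s u v hrep)
        simp only [map_sum, Kab_tmul] at hcongr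
        calc ∑ i ∈ s, W.counit (v l * (u i * a)) • (u l ⊗ₜ[k] (v i * b))
            = ∑ i ∈ s, theta W (v l) a (W.comul (u i)) • (u l ⊗ₜ[k] (v i * b)) := by
              refine Finset.sum_congr rfl fun i _ => ?_
              rw [← mul_assoc, wc1, theta_apply]
          _ = ∑ m ∈ s, ∑ j ∈ s,
                theta W (v l) a (u m ⊗ₜ[k] (u j * v m)) • (u l ⊗ₜ[k] (v j * b)) := hcongr
          _ = ∑ m ∈ s, ∑ j ∈ s,
                (W.counit (v l * u m) * W.counit (u j * v m * a)) •
                  (u l ⊗ₜ[k] (v j * b)) := by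
              refine Finset.sum_congr rfl fun m _ => Finset.sum_congr rfl fun j _ => ?_
              rw [theta_tmul, mul_assoc (u j) (v m) a, ← mul_assoc (u j) (v m) a]
      have collapse : ∀ m ∈ s, ∀ j ∈ s,
          ∑ l ∈ s, (W.counit (v l * u m) * W.counit (u j * v m * a)) •
              (u l ⊗ₜ[k] (v j * b)) =
            W.counit (u j * v m * a) • (W.εs' (u m) ⊗ₜ[k] (v j * b)) := by
        intro m _ j _
        rw [eps_s'_apply W s u v hrep, sum_tmul, Finset.smul_sum]
        refine Finset.sum_congr rfl fun l _ => ?_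
        simp only [smul_tmul', smul_smul]
        rw [mul_comm]
      calc (W.εs'.rTensor H) ((∑ i ∈ s, u i ⊗ₜ[k] v i) * (a ⊗ₜ[k] b))
          = ∑ i ∈ s, ∑ l ∈ s, W.counit (v l * (u i * a)) • (u l ⊗ₜ[k] (v i * b)) := step1
        _ = ∑ l ∈ s, ∑ i ∈ s, W.counit (v l * (u i * a)) • (u l ⊗ₜ[k] (v i * b)) :=
            Finset.sum_comm
        _ = ∑ l ∈ s, ∑ m ∈ s, ∑ j ∈ s,
              (W.counit (v l * u m) * W.counit (u j * v m * a)) •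
                (u l ⊗ₜ[k] (v j * b)) := Finset.sum_congr rfl step2
        _ = ∑ m ∈ s, ∑ l ∈ s, ∑ j ∈ s,
              (W.counit (v l * u m) * W.counit (u j * v m * a)) •
                (u l ⊗ₜ[k] (v j * b)) := Finset.sum_comm
        _ = ∑ m ∈ s, ∑ j ∈ s, ∑ l ∈ s,
              (W.counit (v l * u m) * W.counit (u j * v m * a)) •
                (u l ⊗ₜ[k] (v j * b)) :=
            Finset.sum_congr rfl fun m _ => Finset.sum_comm
        _ = ∑ m ∈ s, ∑ j ∈ s,
              W.counit (u j * v m * a) • (W.εs' (u m) ⊗ₜ[k] (v j * b)) :=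
            Finset.sum_congr rfl fun m hm => Finset.sum_congr rfl (collapse m hm)
        _ = ∑ j ∈ s, ∑ m ∈ s,
              W.counit (u j * v m * a) • (W.εs' (u m) ⊗ₜ[k] (v j * b)) :=
            Finset.sum_comm
        _ = ∑ j ∈ s, ∑ m ∈ s,
              W.counit (u j * v m * a) • (u m ⊗ₜ[k] (v j * b)) := by
            refine Finset.sum_congr rfl fun j _ => ?_
            have hcongr := congrArg (Fmap W (u j) a (v j * b)) (L2' W s u v hrep)
            simp only [map_sum, Fmap_tmul] at hcongr
            exact hcongr
        _ = ∑ m ∈ s, ∑ j ∈ s,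
              W.counit (u j * v m * a) • (u m ⊗ₜ[k] (v j * b)) := Finset.sum_comm
        _ = ∑ m ∈ s, ∑ j ∈ s, Gmap W (u j * v m) (v j) (u m) (a ⊗ₜ[k] b) := by
            refine Finset.sum_congr rfl fun m _ => Finset.sum_congr rfl fun j _ => ?_
            rw [Gmap_tmul, mul_assoc]

/-- Identity J: `(ε̄ₛ' ⊗ id) Δ(h) = Δ(1) ⬝ (1 ⊗ h)` in representation form. -/
theorem Jrep (hrep : W.comul 1 = ∑ i ∈ s, u i ⊗ₜ[k] v i) (h : H) :
    (W.εs'.rTensor H) (W.comul h) = ∑ i ∈ s, u i ⊗ₜ[k] (v i * h) := by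
  have h0 : W.comul h = (∑ i ∈ s, u i ⊗ₜ[k] v i) * W.comul h := by
    rw [← hrep, ← W.comul_mul, one_mul]
  rw [h0, keyJ W s u v hrep]
  have hw := congrArg (LinearMap.lTensor H ((phiL W) ∘ₗ
      LinearMap.mulRight k (W.comul h))) (wur_rep W s u v hrep)
  simp only [map_sum, LinearMap.lTensor_tmul, LinearMap.coe_comp, Function.comp_apply,
    LinearMap.mulRight_apply] at hw
  calc ∑ m ∈ s, ∑ j ∈ s, Gmap W (u j * v m) (v j) (u m) (W.comul h)
      = ∑ m ∈ s, ∑ j ∈ s,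
          u m ⊗ₜ[k] (phiL W (((u j * v m) ⊗ₜ[k] v j) * W.comul h)) := by
        simp only [Gmap_apply]
    _ = ∑ m ∈ s, u m ⊗ₜ[k] (phiL W (W.comul (v m) * W.comul h)) := hw.symm
    _ = ∑ m ∈ s, u m ⊗ₜ[k] (v m * h) := by
        refine Finset.sum_congr rfl fun m _ => ?_
        rw [← W.comul_mul, phiL_comul]

/-- `Lmap y b (x ⊗ w) = ε(y*w*b) • x`. -/
noncomputable def Lmap (y b : H) : H ⊗[k] H →ₗ[k] H :=
  (TensorProduct.rid k H).toLinearMap ∘ₗ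
    LinearMap.lTensor H (W.counit ∘ₗ LinearMap.mulRight k b ∘ₗ LinearMap.mulLeft k y)

theorem Lmap_tmul (y b x w : H) : Lmap W y b (x ⊗ₜ[k] w) = W.counit (y * w * b) • x := by
  simp [Lmap]

/-- `Mmap y b (x ⊗ w) = θ_{y,b}(w) • x` for `w : H ⊗ H`. -/
noncomputable def Mmap (y b : H) : H ⊗[k] (H ⊗[k] H) →ₗ[k] H :=
  (TensorProduct.rid k H).toLinearMap ∘ₗ LinearMap.lTensor H (theta W y b)

theorem Mmap_tmul (y b x : H) (w : H ⊗[k] H) :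
    Mmap W y b (x ⊗ₜ[k] w) = theta W y b w • x := by
  simp [Mmap]

theorem comul_eps_s' (hrep : W.comul 1 = ∑ i ∈ s, u i ⊗ₜ[k] v i) (a : H) :
    W.comul (W.εs' a) = ∑ i ∈ s, W.counit (v i * a) • W.comul (u i) := by
  rw [eps_s'_apply W s u v hrep, map_sum]
  exact Finset.sum_congr rfl fun i _ => by rw [map_smul]

theorem F8 (hrep : W.comul 1 = ∑ i ∈ s, u i ⊗ₜ[k] v i) (a b : H) :
    W.εs' (W.εs' a * b) = ∑ m ∈ s, W.counit (W.εs' a * v m * b) • u m := by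
  have key1 : ∀ c : H, W.counit (c * (W.εs' a * b)) =
      theta W c b (∑ j ∈ s, W.counit (v j * a) • W.comul (u j)) := by
    intro c
    rw [map_sum]
    simp only [map_smul, smul_eq_mul, theta_apply, ← wc1]
    rw [← mul_assoc]
    nth_rewrite 1 [eps_s'_apply W s u v hrep]
    rw [Finset.mul_sum, Finset.sum_mul, map_sum]
    exact Finset.sum_congr rfl fun j _ => by
      rw [mul_smul_comm, smul_mul_assoc, map_smul, smul_eq_mul]
  calc W.εs' (W.εs' a * b)
      = ∑ i ∈ s, W.counit (v i * (W.εs' a * b)) • u i :=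
        eps_s'_apply W s u v hrep _
    _ = ∑ i ∈ s, theta W (v i) b (∑ m ∈ s, u m ⊗ₜ[k] (W.εs' a * v m)) • u i := by
        refine Finset.sum_congr rfl fun i _ => ?_
        rw [key1 (v i), F5b W s u v hrep]
    _ = ∑ i ∈ s, (∑ m ∈ s, W.counit (v i * u m) * W.counit (W.εs' a * v m * b)) • u i := by
        refine Finset.sum_congr rfl fun i _ => ?_
        rw [map_sum]
        refine congrArg (· • u i) (Finset.sum_congr rfl fun m _ => ?_)
        rw [theta_tmul, mul_assoc]
    _ = ∑ i ∈ s, ∑ m ∈ s,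
          (W.counit (v i * u m) * W.counit (W.εs' a * v m * b)) • u i :=
        Finset.sum_congr rfl fun i _ => Finset.sum_smul
    _ = ∑ m ∈ s, ∑ i ∈ s,
          (W.counit (v i * u m) * W.counit (W.εs' a * v m * b)) • u i :=
        Finset.sum_comm
    _ = ∑ m ∈ s, W.counit (W.εs' a * v m * b) •
          (∑ i ∈ s, W.counit (v i * u m) • u i) := by
        refine Finset.sum_congr rfl fun m _ => ?_
        rw [Finset.smul_sum]
        refine Finset.sum_congr rfl fun i _ => ?_
        rw [smul_smul, mul_comm]
    _ = ∑ m ∈ s, W.counit (W.εs' a * v m * b) • W.εs' (u m) :=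
        Finset.sum_congr rfl fun m _ => by rw [← eps_s'_apply W s u v hrep]
    _ = ∑ m ∈ s, W.counit (W.εs' a * v m * b) • u m := by
        have hcongr := congrArg (Lmap W (W.εs' a) b) (L2' W s u v hrep)
        simpa only [map_sum, Lmap_tmul] using hcongr

theorem F9 (hrep : W.comul 1 = ∑ i ∈ s, u i ⊗ₜ[k] v i) (a b : H) :
    W.εs' (W.εs' a * b) = W.εs' (W.εs' a * W.εs' b) := by
  rw [F8 W s u v hrep a b, F8 W s u v hrep a (W.εs' b)]
  have hcongr := congrArg (Mmap W (W.εs' a) b) (wul_rep W s u v hrep)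
  simp only [map_sum, Mmap_tmul] at hcongr
  calc ∑ m ∈ s, W.counit (W.εs' a * v m * b) • u m
      = ∑ m ∈ s, theta W (W.εs' a) b (W.comul (v m)) • u m := by
        refine Finset.sum_congr rfl fun m _ => ?_
        rw [theta_apply, ← wc1]
    _ = ∑ l ∈ s, ∑ m ∈ s,
          theta W (W.εs' a) b ((v l * u m) ⊗ₜ[k] v m) • u l := hcongr
    _ = ∑ l ∈ s, ∑ m ∈ s,
          (W.counit (v m * b) * W.counit (W.εs' a * v l * u m)) • u l := by
        refine Finset.sum_congr rfl fun l _ => Finset.sum_congr rfl fun m _ => ?_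
        rw [theta_tmul, mul_comm, ← mul_assoc (W.εs' a) (v l) (u m)]
    _ = ∑ l ∈ s, W.counit (W.εs' a * v l * W.εs' b) • u l := by
        refine Finset.sum_congr rfl fun l _ => ?_
        rw [eps_s'_apply W s u v hrep b, Finset.mul_sum, map_sum, Finset.sum_smul]
        refine Finset.sum_congr rfl fun m _ => ?_
        rw [mul_smul_comm, map_smul, smul_eq_mul]

theorem D1_mul_comul (hrep : W.comul 1 = ∑ i ∈ s, u i ⊗ₜ[k] v i) (x : H) :
    (∑ i ∈ s, u i ⊗ₜ[k] v i) * W.comul x = W.comul x := by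
  rw [← hrep, ← W.comul_mul, one_mul]

theorem comul_eps_s'_left (hrep : W.comul 1 = ∑ i ∈ s, u i ⊗ₜ[k] v i) (a : H) :
    W.comul (W.εs' a) = ((1 : H) ⊗ₜ[k] W.εs' a) * ∑ i ∈ s, u i ⊗ₜ[k] v i := by
  rw [comul_eps_s' W s u v hrep, F5b W s u v hrep, Finset.mul_sum]
  exact Finset.sum_congr rfl fun i _ => by
    rw [Algebra.TensorProduct.tmul_mul_tmul, one_mul]

theorem comul_eps_s'_right (hrep : W.comul 1 = ∑ i ∈ s, u i ⊗ₜ[k] v i) (a : H) :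
    W.comul (W.εs' a) = (∑ i ∈ s, u i ⊗ₜ[k] v i) * ((1 : H) ⊗ₜ[k] W.εs' a) := by
  rw [comul_eps_s' W s u v hrep, F5a W s u v hrep, Finset.sum_mul]
  exact Finset.sum_congr rfl fun i _ => by
    rw [Algebra.TensorProduct.tmul_mul_tmul, mul_one]

theorem F10 (hrep : W.comul 1 = ∑ i ∈ s, u i ⊗ₜ[k] v i) (a b : H) :
    W.εs' (W.εs' a * W.εs' b) = W.εs' a * W.εs' b := by
  set D1 : H ⊗[k] H := ∑ i ∈ s, u i ⊗ₜ[k] v i with hD1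
  have hc : W.comul (W.εs' a * W.εs' b) =
      D1 * ((1 : H) ⊗ₜ[k] (W.εs' a * W.εs' b)) := by
    calc W.comul (W.εs' a * W.εs' b)
        = W.comul (W.εs' a) * W.comul (W.εs' b) := W.comul_mul _ _
      _ = (((1 : H) ⊗ₜ[k] W.εs' a) * D1) * W.comul (W.εs' b) := by
          rw [← comul_eps_s'_left W s u v hrep]
      _ = ((1 : H) ⊗ₜ[k] W.εs' a) * (D1 * W.comul (W.εs' b)) := mul_assoc _ _ _
      _ = ((1 : H) ⊗ₜ[k] W.εs' a) * W.comul (W.εs' b) := by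
          rw [D1_mul_comul W s u v hrep]
      _ = ((1 : H) ⊗ₜ[k] W.εs' a) * (D1 * ((1 : H) ⊗ₜ[k] W.εs' b)) := by
          rw [← comul_eps_s'_right W s u v hrep]
      _ = (((1 : H) ⊗ₜ[k] W.εs' a) * D1) * ((1 : H) ⊗ₜ[k] W.εs' b) :=
          (mul_assoc _ _ _).symm
      _ = W.comul (W.εs' a) * ((1 : H) ⊗ₜ[k] W.εs' b) := by
          rw [← comul_eps_s'_left W s u v hrep]
      _ = (D1 * ((1 : H) ⊗ₜ[k] W.εs' a)) * ((1 : H) ⊗ₜ[k] W.εs' b) := by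
          rw [← comul_eps_s'_right W s u v hrep]
      _ = D1 * (((1 : H) ⊗ₜ[k] W.εs' a) * ((1 : H) ⊗ₜ[k] W.εs' b)) := mul_assoc _ _ _
      _ = D1 * ((1 : H) ⊗ₜ[k] (W.εs' a * W.εs' b)) := by
          rw [Algebra.TensorProduct.tmul_mul_tmul, one_mul]
  have h1 := phiR_comul W (W.εs' a * W.εs' b)
  rw [hc] at h1
  have h2 : (phiR W) (D1 * ((1 : H) ⊗ₜ[k] (W.εs' a * W.εs' b))) =
      W.εs' (W.εs' a * W.εs' b) := by
    rw [hD1, Finset.sum_mul, map_sum, eps_s'_apply W s u v hrep (W.εs' a * W.εs' b)]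
    refine Finset.sum_congr rfl fun i _ => ?_
    rw [Algebra.TensorProduct.tmul_mul_tmul, mul_one, phiR_tmul]
  rw [h2] at h1
  exact h1

theorem F11 (hrep : W.comul 1 = ∑ i ∈ s, u i ⊗ₜ[k] v i) (a b : H) :
    W.εs' (W.εs' a * b) = W.εs' a * W.εs' b := by
  rw [F9 W s u v hrep a b, F10 W s u v hrep a b]

/-- Fact 3: `Δ1 ⬝ (ε̄ₛ'(z) ⊗ 1) = Δ1 ⬝ (1 ⊗ z)` for `z = εt h`. -/
theorem F12 (hrep : W.comul 1 = ∑ i ∈ s, u i ⊗ₜ[k] v i) (h : H) :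
    (∑ i ∈ s, u i ⊗ₜ[k] v i) * (W.εs' (W.εt h) ⊗ₜ[k] (1 : H)) =
      (∑ i ∈ s, u i ⊗ₜ[k] v i) * ((1 : H) ⊗ₜ[k] W.εt h) := by
  have hA := congrArg (LinearMap.rTensor H
    (W.εs' ∘ₗ LinearMap.mulRight k (W.εt h))) (L2' W s u v hrep)
  simp only [map_sum, LinearMap.rTensor_tmul, LinearMap.coe_comp, Function.comp_apply,
    LinearMap.mulRight_apply] at hA
  have hB := congrArg (LinearMap.rTensor H
    (LinearMap.mulRight k (W.εs' (W.εt h)))) (L2' W s u v hrep)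
  simp only [map_sum, LinearMap.rTensor_tmul, LinearMap.mulRight_apply] at hB
  have hC : (W.εs'.rTensor H) (W.comul (W.εt h)) =
      ∑ i ∈ s, W.εs' (u i * W.εt h) ⊗ₜ[k] v i := by
    rw [F6 W s u v hrep h, map_sum]
    simp only [LinearMap.rTensor_tmul]
  calc (∑ i ∈ s, u i ⊗ₜ[k] v i) * (W.εs' (W.εt h) ⊗ₜ[k] (1 : H))
      = ∑ i ∈ s, (u i * W.εs' (W.εt h)) ⊗ₜ[k] v i := by
        rw [Finset.sum_mul]
        exact Finset.sum_congr rfl fun i _ => by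
          rw [Algebra.TensorProduct.tmul_mul_tmul, mul_one]
    _ = ∑ i ∈ s, (W.εs' (u i) * W.εs' (W.εt h)) ⊗ₜ[k] v i := hB.symm
    _ = ∑ i ∈ s, W.εs' (W.εs' (u i) * W.εt h) ⊗ₜ[k] v i := by
        exact Finset.sum_congr rfl fun i _ => by
          rw [F11 W s u v hrep (u i) (W.εt h)]
    _ = ∑ i ∈ s, W.εs' (u i * W.εt h) ⊗ₜ[k] v i := hA
    _ = (W.εs'.rTensor H) (W.comul (W.εt h)) := hC.symm
    _ = ∑ i ∈ s, u i ⊗ₜ[k] (v i * W.εt h) := Jrep W s u v hrep (W.εt h)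
    _ = (∑ i ∈ s, u i ⊗ₜ[k] v i) * ((1 : H) ⊗ₜ[k] W.εt h) := by
        rw [Finset.sum_mul]
        exact Finset.sum_congr rfl fun i _ => by
          rw [Algebra.TensorProduct.tmul_mul_tmul, mul_one]

/-- `Lam2 (x ⊗ w) = ε̄ₛ'(w) * x`. -/
noncomputable def Lam2 : H ⊗[k] H →ₗ[k] H :=
  (LinearMap.mul' k H) ∘ₗ (TensorProduct.map W.εs' LinearMap.id) ∘ₗ
    (TensorProduct.comm k H H).toLinearMap

theorem Lam2_tmul (x w : H) : Lam2 W (x ⊗ₜ[k] w) = W.εs' w * x := by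
  simp [Lam2]

/-- `∑ ε̄ₛ'(εt(v i)) * u i = 1`. -/
theorem F13 (hrep : W.comul 1 = ∑ i ∈ s, u i ⊗ₜ[k] v i) :
    ∑ i ∈ s, W.εs' (W.εt (v i)) * u i = 1 := by
  have h1 := congrArg (Lam2 W) (L2 W s u v hrep)
  simp only [map_sum, Lam2_tmul] at h1
  have h3 : ∑ i ∈ s, ∑ j ∈ s, W.counit (v i * v j) • (u i * u j) =
      ∑ i ∈ s, W.counit (v i) • u i := by
    have h0 := congrArg (phiR W) (D1_idem W s u v hrep)
    rw [Finset.sum_mul_sum] at h0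
    simp only [Algebra.TensorProduct.tmul_mul_tmul] at h0
    simpa only [map_sum, phiR_tmul] using h0
  calc ∑ i ∈ s, W.εs' (W.εt (v i)) * u i
      = ∑ i ∈ s, W.εs' (v i) * u i := h1
    _ = ∑ i ∈ s, ∑ l ∈ s, W.counit (v l * v i) • (u l * u i) := by
        refine Finset.sum_congr rfl fun i _ => ?_
        rw [eps_s'_apply W s u v hrep, Finset.sum_mul]
        exact Finset.sum_congr rfl fun l _ => smul_mul_assoc _ _ _
    _ = ∑ l ∈ s, ∑ i ∈ s, W.counit (v l * v i) • (u l * u i) := Finset.sum_comm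
    _ = ∑ i ∈ s, W.counit (v i) • u i := h3
    _ = 1 := counit_v_one W s u v hrep

end Aux

section ModAux

variable (k H M N : Type*) [CommRing k] [Ring H] [Algebra k H]
  [AddCommGroup M] [Module k M] [Module H M] [IsScalarTower k H M]
  [AddCommGroup N] [Module k N] [Module H N] [IsScalarTower k H N]

/-- The action of `H ⊗ H` on `M ⊗ N`. -/
noncomputable def act : H ⊗[k] H →ₗ[k] M ⊗[k] N →ₗ[k] M ⊗[k] N :=
  (TensorProduct.homTensorHomMap (RingHom.id k) M N M N) ∘ₗ (TensorProduct.map lsmulL lsmulL)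

variable {k H M N}

theorem act_tmul (a b : H) :
    act k H M N (a ⊗ₜ[k] b) = TensorProduct.map (lsmulM a) (lsmulM b) := by
  simp only [act, LinearMap.coe_comp, Function.comp_apply, map_tmul,
    TensorProduct.homTensorHomMap_apply]
  rfl

theorem act_apply_tmul (a b : H) (m : M) (n : N) :
    act k H M N (a ⊗ₜ[k] b) (m ⊗ₜ[k] n) = (a • m) ⊗ₜ[k] (b • n) := by
  rw [act_tmul]; rfl

theorem lsmulM_mul (a c : H) :
    (lsmulM (a * c) : M →ₗ[k] M) = (lsmulM a : M →ₗ[k] M) ∘ₗ lsmulM c :=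
  LinearMap.ext fun m => mul_smul a c m

theorem act_mul (x y : H ⊗[k] H) (w : M ⊗[k] N) :
    act k H M N (x * y) w = act k H M N x (act k H M N y w) := by
  induction x using TensorProduct.induction_on with
  | zero => simp
  | add x₁ x₂ h₁ h₂ => simp only [add_mul, map_add, LinearMap.add_apply, h₁, h₂]
  | tmul a b =>
      induction y using TensorProduct.induction_on with
      | zero => simp
      | add y₁ y₂ h₁ h₂ => simp only [mul_add, map_add, LinearMap.add_apply, h₁, h₂]
      | tmul c d =>
          rw [Algebra.TensorProduct.tmul_mul_tmul, act_tmul, act_tmul, act_tmul,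
            lsmulM_mul, lsmulM_mul, TensorProduct.map_comp, LinearMap.comp_apply]

end ModAux

/-- For left `H`-modules `M, N` over a weak bialgebra `H`, the projection
`π(m ⊗ n) = 1₍₁₎m ⊗ 1₍₂₎n` induces an isomorphism `M ⊗_{H_t} N ≅ Δ(1)(M ⊗ N)`,
where the right `H_t`-action on `M` is `m·z = ε̄_s(z)m`.  Here `M ⊗_{H_t} N` is
realized as the quotient of `M ⊗_k N` by the span of the balancing relations. -/
theorem weakBialgebra_truncated_tensor_iso
    {k H M N : Type*} [CommRing k] [Ring H] [Algebra k H]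
    [AddCommGroup M] [Module k M] [Module H M] [IsScalarTower k H M]
    [AddCommGroup N] [Module k N] [Module H N] [IsScalarTower k H N]
    (W : WeakBialgebra k H)
    {ι : Type*} (s : Finset ι) (u v : ι → H)
    (hrep : W.comul 1 = ∑ i ∈ s, u i ⊗ₜ[k] v i) :
    ∃ e : (M ⊗[k] N ⧸ Submodule.span k
        {x : M ⊗[k] N | ∃ z ∈ Set.range W.εt, ∃ (m : M) (n : N),
          x = (W.εs' z • m) ⊗ₜ[k] n - m ⊗ₜ[k] (z • n)}) ≃ₗ[k]
      LinearMap.range (∑ i ∈ s, TensorProduct.map (lsmulM (u i)) (lsmulM (v i))),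
      ∀ x : M ⊗[k] N,
        (e (Submodule.Quotient.mk x)).1 =
          (∑ i ∈ s, TensorProduct.map (lsmulM (u i)) (lsmulM (v i))) x := by
  classical
  set D1 : H ⊗[k] H := ∑ i ∈ s, u i ⊗ₜ[k] v i with hD1
  set P : M ⊗[k] N →ₗ[k] M ⊗[k] N :=
    ∑ i ∈ s, TensorProduct.map (lsmulM (u i)) (lsmulM (v i)) with hPi
  set R : Submodule k (M ⊗[k] N) := Submodule.span k
      {x : M ⊗[k] N | ∃ z ∈ Set.range W.εt, ∃ (m : M) (n : N),
        x = (W.εs' z • m) ⊗ₜ[k] n - m ⊗ₜ[k] (z • n)} with hRdef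
  have hacts : P = act k H M N D1 := by
    rw [hPi, hD1, map_sum]
    exact Finset.sum_congr rfl fun i _ => (act_tmul (u i) (v i)).symm
  have hgen0 : ∀ r ∈ {x : M ⊗[k] N | ∃ z ∈ Set.range W.εt, ∃ (m : M) (n : N),
      x = (W.εs' z • m) ⊗ₜ[k] n - m ⊗ₜ[k] (z • n)}, P r = 0 := by
    rintro r ⟨z, ⟨h0, rfl⟩, m, n, rfl⟩
    rw [map_sub, hacts]
    have e1 : act k H M N D1 ((W.εs' (W.εt h0) • m) ⊗ₜ[k] n) =
        act k H M N (D1 * (W.εs' (W.εt h0) ⊗ₜ[k] (1 : H))) (m ⊗ₜ[k] n) := by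
      rw [act_mul, act_apply_tmul, one_smul]
    have e2 : act k H M N D1 (m ⊗ₜ[k] (W.εt h0 • n)) =
        act k H M N (D1 * ((1 : H) ⊗ₜ[k] W.εt h0)) (m ⊗ₜ[k] n) := by
      rw [act_mul, act_apply_tmul, one_smul]
    rw [e1, e2, hD1, F12 W s u v hrep h0, sub_self]
  have hRker : R ≤ LinearMap.ker P :=
    Submodule.span_le.mpr fun r hr => LinearMap.mem_ker.mpr (hgen0 r hr)
  have hsub : ∀ x : M ⊗[k] N, P x - x ∈ R := by
    intro x
    induction x using TensorProduct.induction_on with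
    | zero => simp only [map_zero, sub_zero, sub_self]; exact zero_mem R
    | add x y hx hy =>
        have hxy : P (x + y) - (x + y) = (P x - x) + (P y - y) := by
          rw [map_add]; abel
        rw [hxy]; exact add_mem hx hy
    | tmul m n =>
        have key : m ⊗ₜ[k] n - P (m ⊗ₜ[k] n) =
            ∑ i ∈ s, ((W.εs' (W.εt (v i)) • (u i • m)) ⊗ₜ[k] n -
              (u i • m) ⊗ₜ[k] (W.εt (v i) • n)) := by
          rw [Finset.sum_sub_distrib]
          have first : ∑ i ∈ s, (W.εs' (W.εt (v i)) • (u i • m)) ⊗ₜ[k] n =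
              m ⊗ₜ[k] n := by
            have h1 : ∀ i ∈ s, (W.εs' (W.εt (v i)) • (u i • m)) ⊗ₜ[k] n =
                ((W.εs' (W.εt (v i)) * u i) • m) ⊗ₜ[k] n := fun i _ => by
              rw [mul_smul]
            rw [Finset.sum_congr rfl h1, ← sum_tmul, ← Finset.sum_smul,
              F13 W s u v hrep, one_smul]
          have second : ∑ i ∈ s, (u i • m) ⊗ₜ[k] (W.εt (v i) • n) =
              P (m ⊗ₜ[k] n) := by
            have h2 : ∀ i ∈ s, (u i • m) ⊗ₜ[k] (W.εt (v i) • n) =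
                act k H M N (u i ⊗ₜ[k] W.εt (v i)) (m ⊗ₜ[k] n) := fun i _ =>
              (act_apply_tmul _ _ _ _).symm
            rw [Finset.sum_congr rfl h2, hacts]
            have h3 := congrArg (fun T => act k H M N T (m ⊗ₜ[k] n))
              (L2 W s u v hrep)
            simp only [map_sum, LinearMap.coe_sum, Finset.sum_apply] at h3
            rw [hD1, map_sum, LinearMap.sum_apply]
            exact h3
          rw [first, second]
        have mem : ∀ i ∈ s, (W.εs' (W.εt (v i)) • (u i • m)) ⊗ₜ[k] n -
            (u i • m) ⊗ₜ[k] (W.εt (v i) • n) ∈ R := fun i _ =>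
          Submodule.subset_span ⟨W.εt (v i), ⟨v i, rfl⟩, u i • m, n, rfl⟩
        have hneg : P (m ⊗ₜ[k] n) - m ⊗ₜ[k] n =
            -(m ⊗ₜ[k] n - P (m ⊗ₜ[k] n)) := by abel
        rw [hneg, key]
        exact neg_mem (Submodule.sum_mem R mem)
  have hidem : ∀ w : M ⊗[k] N, P (P w) = P w := by
    intro w
    rw [hacts, ← act_mul, hD1, D1_idem W s u v hrep]
  refine ⟨LinearEquiv.ofLinear
      (Submodule.liftQ R P.rangeRestrict (by rwa [LinearMap.ker_rangeRestrict]))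
      (R.mkQ ∘ₗ (LinearMap.range P).subtype) ?_ ?_, ?_⟩
  · apply LinearMap.ext
    rintro ⟨w, ⟨x, rfl⟩⟩
    apply Subtype.ext
    simp only [LinearMap.coe_comp, Function.comp_apply, Submodule.coe_subtype,
      Submodule.mkQ_apply, LinearMap.id_coe, id_eq, Submodule.liftQ_apply,
      LinearMap.codRestrict_apply, LinearMap.rangeRestrict]
    exact hidem x
  · apply LinearMap.ext
    intro q
    obtain ⟨x, rfl⟩ := Submodule.mkQ_surjective R q
    simp only [LinearMap.coe_comp, Function.comp_apply, Submodule.mkQ_apply,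
      Submodule.liftQ_apply, Submodule.coe_subtype, LinearMap.id_coe, id_eq]
    exact (Submodule.Quotient.eq R).mpr (hsub x)
  · intro x
    rw [LinearEquiv.ofLinear_apply]
    rw [Submodule.liftQ_apply]
    rfl
end

section
/- In a weak Hopf algebra H, for all h ∈ H: Δ(ε_t(h)) = h_{(1)}S(h_{(3)}) ⊗ ε_t(h_{(2)}) and Δ(ε_s(h)) = ε_s(h_{(2)}) ⊗ S(h_{(1)})h_{(3)}. -/
open TensorProduct

set_option synthInstance.maxHeartbeats 1000000

section Aux
open TensorProduct LinearMap
variable {k H : Type*} [CommRing k] [Ring H] [Algebra k H]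

lemma εt_rep (W : WeakBialgebra k H) (s : Finset (H × H))
    (hs : W.comul 1 = ∑ p ∈ s, p.1 ⊗ₜ[k] p.2) (x : H) :
    W.εt x = ∑ p ∈ s, W.counit (p.1 * x) • p.2 := by
  simp only [WeakBialgebra.εt, LinearMap.coe_comp, Function.comp_apply,
    AlgHom.toLinearMap_apply, Algebra.TensorProduct.includeLeft_apply,
    LinearMap.mulLeft_apply, hs, Finset.sum_mul, Algebra.TensorProduct.tmul_mul_tmul,
    mul_one, map_sum, LinearMap.rTensor_tmul, LinearEquiv.coe_coe, TensorProduct.lid_tmul]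

lemma εs_rep (W : WeakBialgebra k H) (s : Finset (H × H))
    (hs : W.comul 1 = ∑ p ∈ s, p.1 ⊗ₜ[k] p.2) (x : H) :
    W.εs x = ∑ p ∈ s, W.counit (x * p.2) • p.1 := by
  simp only [WeakBialgebra.εs, LinearMap.coe_comp, Function.comp_apply,
    AlgHom.toLinearMap_apply, Algebra.TensorProduct.includeRight_apply,
    LinearMap.mulRight_apply, hs, Finset.mul_sum, Algebra.TensorProduct.tmul_mul_tmul,
    one_mul, map_sum, LinearMap.lTensor_tmul, LinearEquiv.coe_coe, TensorProduct.rid_tmul]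

lemma wur_rep_s11 (W : WeakBialgebra k H) (s : Finset (H × H))
    (hs : W.comul 1 = ∑ p ∈ s, p.1 ⊗ₜ[k] p.2) :
    (W.comul.lTensor H) (W.comul 1) =
      ∑ r ∈ s, ∑ p ∈ s, p.1 ⊗ₜ[k] ((r.1 * p.2) ⊗ₜ[k] r.2) := by
  rw [W.weak_unit_right]
  conv_lhs => rw [hs]
  simp only [map_sum, Algebra.TensorProduct.includeRight_apply,
    Algebra.TensorProduct.map_tmul, AlgHom.coe_id, id_eq,
    Algebra.TensorProduct.includeLeft_apply, Finset.sum_mul_sum,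
    Algebra.TensorProduct.tmul_mul_tmul, one_mul, mul_one]


lemma lem_A (W : WeakBialgebra k H) (h : H) :
    (LinearMap.lTensor H W.εt) (W.comul h) = W.comul 1 * (h ⊗ₜ[k] 1) := by
  obtain ⟨s, hs⟩ := TensorProduct.exists_finset (W.comul 1)
  obtain ⟨t, ht⟩ := TensorProduct.exists_finset (W.comul h)
  set g : H ⊗[k] H →ₗ[k] H :=
    (TensorProduct.rid k H).toLinearMap ∘ₗ (W.counit.lTensor H) ∘ₗ
      LinearMap.mulRight k (W.comul h) with hg
  have hgs : ∀ a b : H, g (a ⊗ₜ[k] b) = ∑ q ∈ t, W.counit (b * q.2) • (a * q.1) := by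
    intro a b
    simp only [hg, LinearMap.coe_comp, Function.comp_apply, LinearMap.mulRight_apply, ht,
      Finset.mul_sum, Algebra.TensorProduct.tmul_mul_tmul, map_sum, LinearMap.lTensor_tmul,
      LinearEquiv.coe_coe, TensorProduct.rid_tmul]
  have hgΔ : ∀ x : H, g (W.comul x) = x * h := by
    intro x
    rw [hg]
    simp only [LinearMap.coe_comp, Function.comp_apply, LinearMap.mulRight_apply,
      LinearEquiv.coe_coe]
    rw [← W.comul_mul]
    exact W.counit_right _
  set Θ : H ⊗[k] (H ⊗[k] H) →ₗ[k] H ⊗[k] H :=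
    (g.rTensor H) ∘ₗ (TensorProduct.assoc k H H H).symm.toLinearMap with hΘ
  have c1 : (LinearMap.lTensor H W.εt) (W.comul h) = Θ ((W.comul.lTensor H) (W.comul 1)) := by
    rw [wur_rep_s11 W s hs]
    have hmul : W.comul h = W.comul 1 * W.comul h := by rw [← W.comul_mul, one_mul]
    rw [hmul, hs, ht, Finset.sum_mul_sum]
    simp only [Algebra.TensorProduct.tmul_mul_tmul, map_sum, LinearMap.lTensor_tmul,
      εt_rep W s hs, hΘ, LinearMap.coe_comp, Function.comp_apply, LinearEquiv.coe_coe,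
      TensorProduct.assoc_symm_tmul, LinearMap.rTensor_tmul, hgs,
      TensorProduct.tmul_sum, TensorProduct.sum_tmul, TensorProduct.tmul_smul,
      TensorProduct.smul_tmul']
    refine Eq.trans (Finset.sum_congr rfl fun p _ => Finset.sum_comm) ?_
    rw [Finset.sum_comm]
    refine Finset.sum_congr rfl fun r _ => Finset.sum_congr rfl fun p _ =>
      Finset.sum_congr rfl fun q _ => ?_
    rw [mul_assoc]
  have c2 : Θ ((W.comul.lTensor H) (W.comul 1)) = W.comul 1 * (h ⊗ₜ[k] 1) := by
    have key : ∀ x, Θ ((TensorProduct.assoc k H H H) x) = (g.rTensor H) x := by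
      intro x
      simp [hΘ]
    rw [← W.coassoc 1, key]
    conv_lhs => rw [hs]
    simp only [map_sum, LinearMap.rTensor_tmul, hgΔ]
    rw [hs, Finset.sum_mul]
    simp only [Algebra.TensorProduct.tmul_mul_tmul, mul_one]
  rw [c1, c2]

lemma lem_C (W : WeakBialgebra k H) (h : H) :
    W.comul (W.εt h) = W.comul 1 * (W.εt h ⊗ₜ[k] 1) := by
  obtain ⟨s, hs⟩ := TensorProduct.exists_finset (W.comul 1)
  set φ : H →ₗ[k] k := W.counit ∘ₗ LinearMap.mulRight k h with hφ
  set Λ : H ⊗[k] (H ⊗[k] H) →ₗ[k] H ⊗[k] H :=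
    (TensorProduct.lid k (H ⊗[k] H)).toLinearMap ∘ₗ (φ.rTensor (H ⊗[k] H)) with hΛ
  have c1 : W.comul (W.εt h) = Λ ((W.comul.lTensor H) (W.comul 1)) := by
    conv_rhs => rw [hs]
    rw [εt_rep W s hs]
    simp only [map_sum, LinearMap.lTensor_tmul, hΛ, LinearMap.coe_comp, Function.comp_apply,
      LinearMap.rTensor_tmul, LinearEquiv.coe_coe, TensorProduct.lid_tmul, hφ,
      LinearMap.mulRight_apply, map_smul]
  have c2 : Λ ((W.comul.lTensor H) (W.comul 1)) = W.comul 1 * (W.εt h ⊗ₜ[k] 1) := by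
    rw [wur_rep_s11 W s hs, hs, Finset.sum_mul, εt_rep W s hs]
    simp only [map_sum, hΛ, LinearMap.coe_comp, Function.comp_apply, LinearMap.rTensor_tmul,
      LinearEquiv.coe_coe, TensorProduct.lid_tmul, hφ, LinearMap.mulRight_apply,
      Algebra.TensorProduct.tmul_mul_tmul, mul_one, Finset.mul_sum, mul_smul_comm,
      TensorProduct.sum_tmul, TensorProduct.smul_tmul']
  rw [c1, c2]

lemma lem_A' (W : WeakBialgebra k H) (h : H) :
    (LinearMap.rTensor H W.εs) (W.comul h) = (1 ⊗ₜ[k] h) * W.comul 1 := by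
  obtain ⟨s, hs⟩ := TensorProduct.exists_finset (W.comul 1)
  obtain ⟨t, ht⟩ := TensorProduct.exists_finset (W.comul h)
  set g : H ⊗[k] H →ₗ[k] H :=
    (TensorProduct.lid k H).toLinearMap ∘ₗ (W.counit.rTensor H) ∘ₗ
      LinearMap.mulLeft k (W.comul h) with hg
  have hgs : ∀ a b : H, g (a ⊗ₜ[k] b) = ∑ q ∈ t, W.counit (q.1 * a) • (q.2 * b) := by
    intro a b
    simp only [hg, LinearMap.coe_comp, Function.comp_apply, LinearMap.mulLeft_apply, ht,
      Finset.sum_mul, Algebra.TensorProduct.tmul_mul_tmul, map_sum, LinearMap.rTensor_tmul,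
      LinearEquiv.coe_coe, TensorProduct.lid_tmul]
  have hgΔ : ∀ x : H, g (W.comul x) = h * x := by
    intro x
    rw [hg]
    simp only [LinearMap.coe_comp, Function.comp_apply, LinearMap.mulLeft_apply,
      LinearEquiv.coe_coe]
    rw [← W.comul_mul]
    exact W.counit_left _
  set Θ : H ⊗[k] (H ⊗[k] H) →ₗ[k] H ⊗[k] H := LinearMap.lTensor H g with hΘ
  have c1 : (LinearMap.rTensor H W.εs) (W.comul h) = Θ ((W.comul.lTensor H) (W.comul 1)) := by
    rw [wur_rep_s11 W s hs]
    have hmul : W.comul h = W.comul h * W.comul 1 := by rw [← W.comul_mul, mul_one]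
    rw [hmul, hs, ht, Finset.sum_mul_sum]
    simp only [Algebra.TensorProduct.tmul_mul_tmul, map_sum, LinearMap.rTensor_tmul,
      εs_rep W s hs, hΘ, LinearMap.lTensor_tmul, hgs,
      TensorProduct.tmul_sum, TensorProduct.sum_tmul, TensorProduct.tmul_smul,
      TensorProduct.smul_tmul']
    refine Eq.trans Finset.sum_comm ?_
    refine Finset.sum_congr rfl fun p _ => Eq.trans Finset.sum_comm ?_
    refine Finset.sum_congr rfl fun r _ => Finset.sum_congr rfl fun q _ => ?_
    rw [mul_assoc]
  have c2 : Θ ((W.comul.lTensor H) (W.comul 1)) = (1 ⊗ₜ[k] h) * W.comul 1 := by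
    conv_lhs => rw [hs]
    rw [hs, Finset.mul_sum]
    simp only [map_sum, hΘ, LinearMap.lTensor_tmul, hgΔ,
      Algebra.TensorProduct.tmul_mul_tmul, one_mul]
  rw [c1, c2]

lemma lem_C' (W : WeakBialgebra k H) (h : H) :
    W.comul (W.εs h) = (1 ⊗ₜ[k] W.εs h) * W.comul 1 := by
  obtain ⟨s, hs⟩ := TensorProduct.exists_finset (W.comul 1)
  set ψ : H →ₗ[k] k := W.counit ∘ₗ LinearMap.mulLeft k h with hψ
  set Λ : (H ⊗[k] H) ⊗[k] H →ₗ[k] H ⊗[k] H :=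
    (TensorProduct.rid k (H ⊗[k] H)).toLinearMap ∘ₗ (ψ.lTensor (H ⊗[k] H)) with hΛ
  have hco : (W.comul.rTensor H) (W.comul 1) =
      (TensorProduct.assoc k H H H).symm ((W.comul.lTensor H) (W.comul 1)) := by
    rw [← W.coassoc 1, LinearEquiv.symm_apply_apply]
  have c1 : W.comul (W.εs h) = Λ ((W.comul.rTensor H) (W.comul 1)) := by
    conv_rhs => rw [hs]
    rw [εs_rep W s hs]
    simp only [map_sum, LinearMap.rTensor_tmul, hΛ, LinearMap.coe_comp, Function.comp_apply,
      LinearMap.lTensor_tmul, LinearEquiv.coe_coe, TensorProduct.rid_tmul, hψ,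
      LinearMap.mulLeft_apply, map_smul]
  have c2 : Λ ((W.comul.rTensor H) (W.comul 1)) = (1 ⊗ₜ[k] W.εs h) * W.comul 1 := by
    rw [hco, wur_rep_s11 W s hs, hs, Finset.mul_sum, εs_rep W s hs]
    simp only [map_sum, TensorProduct.assoc_symm_tmul, hΛ, LinearMap.coe_comp,
      Function.comp_apply, LinearMap.lTensor_tmul, LinearEquiv.coe_coe,
      TensorProduct.rid_tmul, hψ, LinearMap.mulLeft_apply,
      Algebra.TensorProduct.tmul_mul_tmul, one_mul, Finset.sum_mul, smul_mul_assoc,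
      TensorProduct.tmul_sum, TensorProduct.tmul_smul, TensorProduct.smul_tmul']
    exact Finset.sum_comm
  rw [c1, c2]

end Aux

/-- In a weak Hopf algebra: `Δ(ε_t(h)) = h₍₁₎S(h₍₃₎) ⊗ ε_t(h₍₂₎)` and
`Δ(ε_s(h)) = ε_s(h₍₂₎) ⊗ S(h₍₁₎)h₍₃₎`. -/
theorem weakHopf_comul_target_source
    {k H : Type*} [CommRing k] [Ring H] [Algebra k H] (WH : WeakHopf k H) (h : H) :
    WH.W.comul (WH.W.εt h) =
      (LinearMap.lTensor H WH.W.εt)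
        ((LinearMap.rTensor H ((LinearMap.mul' k H) ∘ₗ (LinearMap.lTensor H WH.S)))
          ((TensorProduct.assoc k H H H).symm
            ((LinearMap.lTensor H (TensorProduct.comm k H H).toLinearMap)
              ((WH.W.comul.lTensor H) (WH.W.comul h))))) ∧
    WH.W.comul (WH.W.εs h) =
      (LinearMap.rTensor H WH.W.εs)
        ((LinearMap.lTensor H ((LinearMap.mul' k H) ∘ₗ (LinearMap.rTensor H WH.S)))
          ((TensorProduct.assoc k H H H)
            ((LinearMap.rTensor H (TensorProduct.comm k H H).toLinearMap)
              ((WH.W.comul.rTensor H) (WH.W.comul h))))) := by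
  obtain ⟨s, hs⟩ := TensorProduct.exists_finset (WH.W.comul 1)
  obtain ⟨t, ht⟩ := TensorProduct.exists_finset (WH.W.comul h)
  constructor
  · have hS : ∑ q ∈ t, q.1 * WH.S q.2 = WH.W.εt h := by
      rw [← WH.id_conv_S h, ht]
      simp [map_sum]
    have key : ∀ (w : H ⊗[k] H) (z : H),
        (LinearMap.lTensor H WH.W.εt)
          ((LinearMap.rTensor H ((LinearMap.mul' k H) ∘ₗ (LinearMap.lTensor H WH.S)))
            ((TensorProduct.assoc k H H H).symm
              ((LinearMap.lTensor H (TensorProduct.comm k H H).toLinearMap)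
                ((TensorProduct.assoc k H H H) (w ⊗ₜ[k] z))))) =
        (LinearMap.rTensor H (LinearMap.mulRight k (WH.S z)))
          ((LinearMap.lTensor H WH.W.εt) w) := by
      intro w z
      induction w using TensorProduct.induction_on with
      | zero => rw [TensorProduct.zero_tmul]; simp only [map_zero]
      | tmul x y =>
        simp [TensorProduct.assoc_tmul, TensorProduct.comm_tmul,
          TensorProduct.assoc_symm_tmul, LinearMap.mul'_apply]
      | add u v hu hv =>
        simp only [TensorProduct.add_tmul, map_add, hu, hv]
    rw [← WH.W.coassoc h, ht]
    simp only [map_sum, LinearMap.rTensor_tmul]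
    rw [Finset.sum_congr rfl fun q _ => key (WH.W.comul q.1) q.2]
    simp only [lem_A WH.W]
    rw [hs]
    simp only [Finset.sum_mul, Algebra.TensorProduct.tmul_mul_tmul, mul_one, map_sum,
      LinearMap.rTensor_tmul, LinearMap.mulRight_apply]
    rw [Finset.sum_comm]
    have inner : ∀ p ∈ s, ∑ q ∈ t, (p.1 * q.1 * WH.S q.2) ⊗ₜ[k] p.2 =
        (p.1 * WH.W.εt h) ⊗ₜ[k] p.2 := by
      intro p _
      rw [← TensorProduct.sum_tmul]
      congr 1
      simp only [mul_assoc]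
      rw [← Finset.mul_sum, hS]
    rw [Finset.sum_congr rfl inner, lem_C WH.W h, hs, Finset.sum_mul]
    simp only [Algebra.TensorProduct.tmul_mul_tmul, mul_one]
  · have hS : ∑ q ∈ t, WH.S q.1 * q.2 = WH.W.εs h := by
      rw [← WH.S_conv_id h, ht]
      simp [map_sum]
    have key : ∀ (z : H) (w : H ⊗[k] H),
        (LinearMap.rTensor H WH.W.εs)
          ((LinearMap.lTensor H ((LinearMap.mul' k H) ∘ₗ (LinearMap.rTensor H WH.S)))
            ((TensorProduct.assoc k H H H)
              ((LinearMap.rTensor H (TensorProduct.comm k H H).toLinearMap)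
                ((TensorProduct.assoc k H H H).symm (z ⊗ₜ[k] w))))) =
        (LinearMap.lTensor H (LinearMap.mulLeft k (WH.S z)))
          ((LinearMap.rTensor H WH.W.εs) w) := by
      intro z w
      induction w using TensorProduct.induction_on with
      | zero => rw [TensorProduct.tmul_zero]; simp only [map_zero]
      | tmul x y =>
        simp [TensorProduct.assoc_tmul, TensorProduct.comm_tmul,
          TensorProduct.assoc_symm_tmul, LinearMap.mul'_apply]
      | add u v hu hv =>
        simp only [TensorProduct.tmul_add, map_add, hu, hv]
    have hco : (WH.W.comul.rTensor H) (WH.W.comul h) =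
        (TensorProduct.assoc k H H H).symm ((WH.W.comul.lTensor H) (WH.W.comul h)) := by
      rw [← WH.W.coassoc h, LinearEquiv.symm_apply_apply]
    rw [hco, ht]
    simp only [map_sum, LinearMap.lTensor_tmul]
    rw [Finset.sum_congr rfl fun q _ => key q.1 (WH.W.comul q.2)]
    simp only [lem_A' WH.W]
    rw [hs]
    simp only [Finset.mul_sum, Algebra.TensorProduct.tmul_mul_tmul, one_mul, map_sum,
      LinearMap.lTensor_tmul, LinearMap.mulLeft_apply]
    rw [Finset.sum_comm]
    have inner : ∀ p ∈ s, ∑ q ∈ t, p.1 ⊗ₜ[k] (WH.S q.1 * (q.2 * p.2)) =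
        p.1 ⊗ₜ[k] (WH.W.εs h * p.2) := by
      intro p _
      rw [← TensorProduct.tmul_sum]
      congr 1
      simp only [← mul_assoc]
      rw [← Finset.sum_mul, hS]
    rw [Finset.sum_congr rfl inner, lem_C' WH.W h, hs, Finset.mul_sum]
    simp only [Algebra.TensorProduct.tmul_mul_tmul, one_mul]
end
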